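/- arXiv:2504.16496 — 4 statements merged into one kernel-verified Lean document; each statement's English description precedes it below -/
import Mathlib

section
/- Let Ω ⊆ ℂ be open, Λ a topological space, λ₀ ∈ Λ, and F : Λ × Ω → ℂ a continuous map such that z ↦ F(λ, z) is holomorphic on Ω for every λ ∈ Λ; put f₀ := F(λ₀, ·), and let X ⊆ Ω be a hyperbolic set for f₀. Let N be an open neighborhood of λ₀ and h₁, h₂ : N × X → Ω two continuous maps such that for i = 1, 2: h_i(λ₀, x) = x for all x ∈ X, x ↦ h_i(λ, x) is injective on X for each λ ∈ N, and F(λ, h_i(λ, x)) = h_i(λ, f₀(x)) for all (λ, x) ∈ N × X. Then there exists a neighborhood 𝒱 ⊆ N of λ₀ such that h₁ = h₂ on 𝒱 × X. -/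
open Filter Metric Set Topology

noncomputable section

/-- `X` is a hyperbolic set of the holomorphic map `f` defined on the open set `Ω ⊆ ℂ`. -/
def IsHypSet (f : ℂ → ℂ) (Ω X : Set ℂ) : Prop :=
  IsCompact X ∧ X ⊆ Ω ∧ Set.MapsTo f X X ∧
    ∃ c : ℝ, 0 < c ∧ ∃ μ : ℝ, 1 < μ ∧
      ∀ x ∈ X, ∀ k : ℕ, 1 ≤ k → c * μ ^ k ≤ ‖deriv (f^[k]) x‖

/-- `h` is a continuous motion of `X` over `N ⊆ Λ`, based at `lam₀` (`h lam₀ = id` on `X`),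
injective in the space variable, with values in `Ω`, conjugating the dynamics:
`F lam (h lam x) = h lam (F lam₀ x)`. -/
def IsConjMotion {Λ : Type*} [TopologicalSpace Λ] (F : Λ → ℂ → ℂ) (lam₀ : Λ)
    (Ω X : Set ℂ) (N : Set Λ) (h : Λ → ℂ → ℂ) : Prop :=
  ContinuousOn (fun p : Λ × ℂ => h p.1 p.2) (N ×ˢ X) ∧
  (∀ x ∈ X, h lam₀ x = x) ∧
  (∀ lam ∈ N, Set.InjOn (h lam) X) ∧
  (∀ lam ∈ N, ∀ x ∈ X, h lam x ∈ Ω) ∧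
  (∀ lam ∈ N, ∀ x ∈ X, F lam (h lam x) = h lam (F lam₀ x))

private lemma differentiableAt_iterate' {Ω : Set ℂ} (hΩ : IsOpen Ω) {g : ℂ → ℂ}
    (hg : DifferentiableOn ℂ g Ω) :
    ∀ (m : ℕ) (z : ℂ), (∀ i < m, g^[i] z ∈ Ω) → DifferentiableAt ℂ (g^[m]) z
  | 0, z, _ => by simpa using differentiableAt_id
  | (m+1), z, hz => by
    rw [Function.iterate_succ']
    exact DifferentiableAt.comp z
      ((hg _ (hz m (Nat.lt_succ_self m))).differentiableAt
        (hΩ.mem_nhds (hz m (Nat.lt_succ_self m))))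
      (differentiableAt_iterate' hΩ hg m z fun i hi => hz i (hi.trans (Nat.lt_succ_self m)))

private def itDom {P : Type*} (Ψ : P → P) (S0 : Set P) : ℕ → Set P
  | 0 => S0
  | n+1 => itDom Ψ S0 n ∩ (S0 ∩ Ψ ⁻¹' itDom Ψ S0 n)

private lemma itDom_subset {P : Type*} (Ψ : P → P) (S0 : Set P) : ∀ n, itDom Ψ S0 n ⊆ S0
  | 0 => subset_rfl
  | _+1 => Set.inter_subset_left.trans (itDom_subset Ψ S0 _)

private lemma itDom_isOpen {P : Type*} [TopologicalSpace P] {Ψ : P → P} {S0 : Set P}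
    (hc : ContinuousOn Ψ S0) (ho : IsOpen S0) : ∀ n, IsOpen (itDom Ψ S0 n)
  | 0 => ho
  | n+1 => (itDom_isOpen hc ho n).inter (hc.isOpen_inter_preimage ho (itDom_isOpen hc ho n))

private lemma itDom_invariant {P : Type*} {Ψ : P → P} {S0 A : Set P} (hA : A ⊆ S0)
    (hinv : Set.MapsTo Ψ A A) : ∀ n, A ⊆ itDom Ψ S0 n
  | 0 => hA
  | n+1 => fun p hp =>
      ⟨itDom_invariant hA hinv n hp, hA hp, itDom_invariant hA hinv n (hinv hp)⟩

private lemma itDom_iterate_mem {P : Type*} {Ψ : P → P} {S0 : Set P} :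
    ∀ (n : ℕ) (p : P), p ∈ itDom Ψ S0 n → ∀ i ≤ n, Ψ^[i] p ∈ S0
  | 0, p, hp, i, hi => by
      simp only [Nat.le_zero.mp hi, Function.iterate_zero, id_eq]; exact hp
  | n+1, p, hp, 0, _ => itDom_subset Ψ S0 (n+1) hp
  | n+1, p, hp, (i+1), hi => by
      rw [Function.iterate_succ_apply]
      exact itDom_iterate_mem n (Ψ p) hp.2.2 i (Nat.succ_le_succ_iff.mp hi)

private lemma itDom_continuousOn {P : Type*} [TopologicalSpace P] {Ψ : P → P} {S0 : Set P}
    (hc : ContinuousOn Ψ S0) : ∀ n, ContinuousOn (Ψ^[n]) (itDom Ψ S0 n)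
  | 0 => continuousOn_id
  | n+1 => by
      rw [Function.iterate_succ]
      exact (itDom_continuousOn hc n).comp (hc.mono (itDom_subset Ψ S0 (n+1)))
        (fun p hp => hp.2.2)

private lemma iterate_prodMap {Λ : Type*} (F : Λ → ℂ → ℂ) :
    ∀ (n : ℕ) (p : Λ × ℂ), (fun q : Λ × ℂ => (q.1, F q.1 q.2))^[n] p = (p.1, (F p.1)^[n] p.2)
  | 0, p => rfl
  | n+1, p => by
      rw [Function.iterate_succ_apply, iterate_prodMap F n, Function.iterate_succ_apply]

private lemma conj_iterate {Λ : Type*} (F : Λ → ℂ → ℂ) (lam₀ lam : Λ) (X : Set ℂ)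
    (h : Λ → ℂ → ℂ) (hX : Set.MapsTo (F lam₀) X X)
    (hconj : ∀ x ∈ X, F lam (h lam x) = h lam (F lam₀ x)) :
    ∀ (j : ℕ), ∀ x ∈ X, (F lam)^[j] (h lam x) = h lam ((F lam₀)^[j] x)
  | 0, x, _ => rfl
  | (j+1), x, hx => by
      rw [Function.iterate_succ_apply', conj_iterate F lam₀ lam X h hX hconj j x hx,
        hconj _ (hX.iterate j hx), Function.iterate_succ_apply']

private lemma motion_close {Λ : Type*} [TopologicalSpace Λ] {X : Set ℂ} (hXc : IsCompact X)
    {N : Set Λ} (hNo : IsOpen N) {lam₀ : Λ} (hN₀ : lam₀ ∈ N) {h : Λ → ℂ → ℂ}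
    (hcont : ContinuousOn (fun p : Λ × ℂ => h p.1 p.2) (N ×ˢ X))
    (hid : ∀ x ∈ X, h lam₀ x = x) {r : ℝ} (hr : 0 < r) :
    ∃ W : Set Λ, IsOpen W ∧ lam₀ ∈ W ∧
      ∀ lam ∈ W, lam ∈ N → ∀ x ∈ X, ‖h lam x - x‖ < r := by
  set ψ : Λ × ℂ → ℂ := fun p => h p.1 p.2 - p.2 with hψ
  have hψc : ContinuousOn ψ (N ×ˢ X) := hcont.sub continuous_snd.continuousOn
  obtain ⟨Q, hQo, hQ⟩ := continuousOn_iff'.mp hψc (ball 0 r) isOpen_ball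
  have hsub : ({lam₀} : Set Λ) ×ˢ X ⊆ Q ∩ (N ×ˢ univ) := by
    intro p hp
    have hfst : p.1 = lam₀ := hp.1
    have hpe : p = (lam₀, p.2) := Prod.ext hfst rfl
    rw [hpe]
    have hmem : ((lam₀, p.2) : Λ × ℂ) ∈ ψ ⁻¹' (ball 0 r) ∩ (N ×ˢ X) := by
      refine ⟨?_, hN₀, hp.2⟩
      have hzero : ψ (lam₀, p.2) = 0 := by
        simp only [hψ]
        simp [hid _ hp.2]
      simp only [mem_preimage, hzero]
      exact mem_ball_self hr
    rw [hQ] at hmem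
    exact ⟨hmem.1, hN₀, trivial⟩
  obtain ⟨u, v, huo, _, hlu, hXv, huv⟩ := generalized_tube_lemma isCompact_singleton hXc
    (hQo.inter (hNo.prod isOpen_univ)) hsub
  refine ⟨u, huo, hlu rfl, fun lam hlam hlamN x hx => ?_⟩
  have h1 : (lam, x) ∈ Q := (huv ⟨hlam, hXv hx⟩).1
  have h2 : (lam, x) ∈ Q ∩ (N ×ˢ X) := ⟨h1, hlamN, hx⟩
  rw [← hQ] at h2
  have h3 := h2.1
  simp only [mem_preimage, mem_ball, dist_zero_right, hψ] at h3
  simpa using h3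

set_option maxHeartbeats 1000000 in
/-- Local uniqueness of continuous conjugating motions of a hyperbolic set:
two such motions over an open neighborhood `N` of `lam₀` agree on a smaller neighborhood
`𝒱 ⊆ N` of `lam₀`. -/
theorem local_uniqueness_of_continuous_motions
    {Λ : Type*} [TopologicalSpace Λ]
    (Ω : Set ℂ) (hΩ : IsOpen Ω) (lam₀ : Λ) (F : Λ → ℂ → ℂ)
    (hFc : ContinuousOn (fun p : Λ × ℂ => F p.1 p.2) (Set.univ ×ˢ Ω))
    (hFh : ∀ lam : Λ, DifferentiableOn ℂ (F lam) Ω)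
    (X : Set ℂ) (hX : IsHypSet (F lam₀) Ω X)
    (N : Set Λ) (hNo : IsOpen N) (hN₀ : lam₀ ∈ N)
    (h₁ h₂ : Λ → ℂ → ℂ)
    (hm₁ : IsConjMotion F lam₀ Ω X N h₁) (hm₂ : IsConjMotion F lam₀ Ω X N h₂) :
    ∃ V : Set Λ, IsOpen V ∧ lam₀ ∈ V ∧ V ⊆ N ∧
      ∀ lam ∈ V, ∀ x ∈ X, h₁ lam x = h₂ lam x := by
  obtain ⟨hXc, hXΩ, hXf, c, hc, μ, hμ, hexp⟩ := hX
  rcases X.eq_empty_or_nonempty with rfl | hXne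
  · exact ⟨N, hNo, hN₀, subset_rfl, fun lam _ x hx => absurd hx (notMem_empty x)⟩
  -- choose the number of iterations `k` so that the iterate expands by a factor ≥ 4 on `X`
  obtain ⟨n, hn⟩ := pow_unbounded_of_one_lt (4 / c) hμ
  set k := n + 1 with hk
  have hμ0 : (0:ℝ) < μ := by linarith
  have hk4 : (4:ℝ) ≤ c * μ ^ k := by
    have h1 : 4 < μ ^ n * c := (div_lt_iff₀ hc).mp hn
    have h2 : (0:ℝ) < μ ^ n := pow_pos hμ0 n
    rw [hk, pow_succ]
    nlinarith
  set G := (F lam₀)^[k] with hG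
  have hGd4 : ∀ x ∈ X, (4:ℝ) ≤ ‖deriv G x‖ := fun x hx =>
    le_trans hk4 (hexp x hx k (Nat.le_add_left 1 n))
  -- the parametrized iteration and its natural domains
  set Ψ : Λ × ℂ → Λ × ℂ := fun q => (q.1, F q.1 q.2) with hΨ
  have hΨc : ContinuousOn Ψ (univ ×ˢ Ω) := continuous_fst.continuousOn.prodMk hFc
  have hS0o : IsOpen ((univ : Set Λ) ×ˢ Ω) := isOpen_univ.prod hΩ
  set S : ℕ → Set (Λ × ℂ) := itDom Ψ (univ ×ˢ Ω) with hS
  have hSo : IsOpen (S k) := itDom_isOpen hΨc hS0o k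
  have hXS : ∀ x ∈ X, (lam₀, x) ∈ S k := by
    intro x hx
    refine itDom_invariant (A := ({lam₀} : Set Λ) ×ˢ X) ?_ ?_ k ⟨rfl, hx⟩
    · rintro ⟨l, z⟩ ⟨_, hz⟩
      exact ⟨trivial, hXΩ hz⟩
    · intro p hp
      have hfst : p.1 = lam₀ := hp.1
      refine ⟨?_, ?_⟩
      · show (Ψ p).1 ∈ ({lam₀} : Set Λ)
        simp [hΨ, hfst]
      · show (Ψ p).2 ∈ X
        simp only [hΨ]
        rw [hfst]
        exact hXf hp.2
  -- the slice at `lam₀`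
  set U : Set ℂ := {z | (lam₀, z) ∈ S k} with hU
  have hUo : IsOpen U := hSo.preimage (Continuous.prodMk_right lam₀)
  have hXU : X ⊆ U := fun x hx => hXS x hx
  have hiterΩ : ∀ (lam : Λ) (z : ℂ), (lam, z) ∈ S k → ∀ i ≤ k, (F lam)^[i] z ∈ Ω := by
    intro lam z hz i hi
    have h1 := itDom_iterate_mem k (lam, z) hz i hi
    rw [iterate_prodMap] at h1
    exact h1.2
  have hGdiffAt : ∀ lam z, (lam, z) ∈ S k → DifferentiableAt ℂ ((F lam)^[k]) z := by
    intro lam z hz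
    exact differentiableAt_iterate' hΩ (hFh lam) k z fun i hi => hiterΩ lam z hz i hi.le
  have hGdiff : DifferentiableOn ℂ G U := fun z hz =>
    (hGdiffAt lam₀ z hz).differentiableWithinAt
  have hderivGc : ContinuousOn (deriv G) U :=
    ((hGdiff.analyticOnNhd hUo).deriv).continuousOn
  -- choice of radii
  obtain ⟨r₀, hr₀, hr₀U⟩ := hXc.exists_cthickening_subset_open hUo hXU
  have hK₀c : IsCompact (cthickening r₀ X) := hXc.cthickening
  have hucont := hK₀c.uniformContinuousOn_of_continuous (hderivGc.mono hr₀U)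
  obtain ⟨δ, hδ, hδ'⟩ := Metric.uniformContinuousOn_iff.mp hucont 1 one_pos
  set r : ℝ := min (r₀ / 4) (δ / 2) with hr
  have hrpos : 0 < r := lt_min (by linarith) (by linarith)
  have hr4 : 4 * r ≤ r₀ := by
    have := min_le_left (r₀ / 4) (δ / 2); linarith
  have hrδ : r < δ := by
    have := min_le_right (r₀ / 4) (δ / 2); linarith
  have hballK₀ : ∀ x ∈ X, closedBall x r ⊆ cthickening r₀ X := by
    intro x hx z hz
    exact mem_cthickening_of_dist_le z x r₀ X hx (le_trans (mem_closedBall.mp hz) (by linarith))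
  -- quantitative expansion of `G` near points of `X`
  have hexpG : ∀ x ∈ X, ∀ a ∈ closedBall x r, ∀ b ∈ closedBall x r,
      3 * ‖a - b‖ ≤ ‖G a - G b‖ := by
    intro x hx a ha b hb
    set u : ℂ → ℂ := fun z => G z - deriv G x * z with hu
    have hdiffAt : ∀ w ∈ closedBall x r, DifferentiableAt ℂ G w := fun w hw =>
      hGdiff.differentiableAt (hUo.mem_nhds (hr₀U (hballK₀ x hx hw)))
    have hukey : ∀ w ∈ closedBall x r,
        HasDerivWithinAt u (deriv G w - deriv G x) (closedBall x r) w := by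
      intro w hw
      have hG' : HasDerivAt G (deriv G w) w := (hdiffAt w hw).hasDerivAt
      have hlin : HasDerivAt (fun z : ℂ => deriv G x * z) (deriv G x) w := by
        simpa using (hasDerivAt_id w).const_mul (deriv G x)
      exact (hG'.sub hlin).hasDerivWithinAt
    have hubound : ∀ w ∈ closedBall x r, ‖deriv G w - deriv G x‖ ≤ 1 := by
      intro w hw
      have hwK : w ∈ cthickening r₀ X := hballK₀ x hx hw
      have hxK : x ∈ cthickening r₀ X := self_subset_cthickening X hx
      have hd : dist w x < δ := lt_of_le_of_lt (mem_closedBall.mp hw) hrδ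
      have h5 := hδ' w hwK x hxK hd
      rw [dist_eq_norm] at h5
      exact h5.le
    have hlip : ‖u a - u b‖ ≤ 1 * ‖a - b‖ :=
      (convex_closedBall x r).norm_image_sub_le_of_norm_hasDerivWithin_le hukey hubound hb ha
    have h4 : 4 * ‖a - b‖ ≤ ‖deriv G x * (a - b)‖ := by
      rw [norm_mul]
      exact mul_le_mul_of_nonneg_right (hGd4 x hx) (norm_nonneg _)
    have htri : ‖deriv G x * (a - b)‖ ≤
        ‖G a - G b‖ + ‖u a - u b‖ := by
      have heq : deriv G x * (a - b) = (G a - G b) - (u a - u b) := by rw [hu]; ring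
      rw [heq]
      exact norm_sub_le _ _
    have hlip' : ‖u a - u b‖ ≤ ‖a - b‖ := by
      rw [one_mul] at hlip
      exact hlip
    linarith
  -- tube lemma for the closeness of the parametrized iterate to `G`
  set K : Set ℂ := cthickening (3 * r) X with hKdef
  have hKc : IsCompact K := hXc.cthickening
  have hKU : K ⊆ U := fun z hz => hr₀U (cthickening_mono (by linarith) X hz)
  have hKS : ∀ z ∈ K, (lam₀, z) ∈ S k := fun z hz => hKU hz
  set Φ : Λ × ℂ → ℂ := fun p => (F p.1)^[k] p.2 with hΦ
  have hΦc : ContinuousOn Φ (S k) := by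
    have h1 : ContinuousOn (Ψ^[k]) (S k) := itDom_continuousOn hΨc k
    have h2 : Φ = fun p => (Ψ^[k] p).2 := by
      funext p
      rw [hΦ, hΨ, iterate_prodMap]
    rw [h2]
    exact continuous_snd.comp_continuousOn h1
  set D : Set (Λ × ℂ) := S k ∩ (univ ×ˢ U) with hD
  have hDo : IsOpen D := hSo.inter (isOpen_univ.prod hUo)
  set Θ : Λ × ℂ → ℂ := fun p => Φ p - G p.2 with hΘ
  have hΘc : ContinuousOn Θ D :=
    (hΦc.mono inter_subset_left).sub
      (hGdiff.continuousOn.comp continuous_snd.continuousOn fun p hp => hp.2.2)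
  set O : Set (Λ × ℂ) := D ∩ Θ ⁻¹' (ball 0 r) with hO
  have hOo : IsOpen O := hΘc.isOpen_inter_preimage hDo isOpen_ball
  have hsub2 : ({lam₀} : Set Λ) ×ˢ K ⊆ O := by
    intro p hp
    have hfst : p.1 = lam₀ := hp.1
    have hpe : p = (lam₀, p.2) := Prod.ext hfst rfl
    rw [hpe]
    have hz : p.2 ∈ K := hp.2
    refine ⟨⟨hKS _ hz, trivial, hKU hz⟩, ?_⟩
    have hzero : Θ (lam₀, p.2) = 0 := by
      simp only [hΘ, hΦ]
      simp [hG]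
    simp only [mem_preimage, hzero]
    exact mem_ball_self hrpos
  obtain ⟨W₃, V₃, hW₃o, _, hlW₃, hKV₃, hWV₃⟩ :=
    generalized_tube_lemma isCompact_singleton hKc hOo hsub2
  have hW₃S : ∀ l ∈ W₃, ∀ z ∈ K, (l, z) ∈ S k ∧ ‖Θ (l, z)‖ < r := by
    intro l hl z hz
    have h7 : (l, z) ∈ O := hWV₃ (Set.mem_prod.mpr ⟨hl, hKV₃ hz⟩)
    rw [hO] at h7
    obtain ⟨h8, h9⟩ := h7
    rw [hD] at h8
    refine ⟨h8.1, ?_⟩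
    simp only [mem_preimage, mem_ball, dist_zero_right] at h9
    simpa using h9
  -- tube lemmas for the two motions being close to the identity
  obtain ⟨W₁, hW₁o, hlW₁, hW₁⟩ := motion_close hXc hNo hN₀ hm₁.1 hm₁.2.1 hrpos
  obtain ⟨W₂, hW₂o, hlW₂, hW₂⟩ := motion_close hXc hNo hN₀ hm₂.1 hm₂.2.1 hrpos
  -- the final neighborhood
  refine ⟨W₁ ∩ W₂ ∩ W₃ ∩ N, ((hW₁o.inter hW₂o).inter hW₃o).inter hNo,
    ⟨⟨⟨hlW₁, hlW₂⟩, hlW₃ rfl⟩, hN₀⟩, fun lam hlam => hlam.2, ?_⟩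
  intro lam hlam x hx
  obtain ⟨⟨⟨hl1, hl2⟩, hl3⟩, hlN⟩ := hlam
  set φ : ℂ → ℝ := fun z => ‖h₁ lam z - h₂ lam z‖ with hφ
  have hφc : ContinuousOn φ X := by
    have c1 : ContinuousOn (fun z => h₁ lam z) X :=
      hm₁.1.comp (Continuous.prodMk_right lam).continuousOn (fun z hz => ⟨hlN, hz⟩)
    have c2 : ContinuousOn (fun z => h₂ lam z) X :=
      hm₂.1.comp (Continuous.prodMk_right lam).continuousOn (fun z hz => ⟨hlN, hz⟩)
    exact (c1.sub c2).norm
  obtain ⟨x₀, hx₀X, hmax⟩ := hXc.exists_isMaxOn hXne hφc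
  have hd0 : φ x₀ ≤ 0 := by
    set a := h₁ lam x₀ with hadef
    set b := h₂ lam x₀ with hbdef
    have haB : a ∈ closedBall x₀ r := by
      rw [mem_closedBall, Complex.dist_eq]
      exact (hW₁ lam hl1 hlN x₀ hx₀X).le
    have hbB : b ∈ closedBall x₀ r := by
      rw [mem_closedBall, Complex.dist_eq]
      exact (hW₂ lam hl2 hlN x₀ hx₀X).le
    set v : ℂ → ℂ := fun z => (F lam)^[k] z - G z with hv
    have hSmem : ∀ z ∈ K, (lam, z) ∈ S k := fun z hz => (hW₃S lam hl3 z hz).1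
    have hvsmall : ∀ z ∈ K, ‖v z‖ < r := by
      intro z hz
      have h6 := (hW₃S lam hl3 z hz).2
      rw [hΘ] at h6
      simp only [hΦ] at h6
      rw [hv]
      exact h6
    have hvdiff : ∀ w ∈ K, DifferentiableAt ℂ v w := by
      intro w hw
      rw [hv]
      exact (hGdiffAt lam w (hSmem w hw)).sub (hGdiffAt lam₀ w (hKS w hw))
    have hballx₀K : closedBall x₀ r ⊆ K := by
      intro z hz
      exact mem_cthickening_of_dist_le z x₀ _ _ hx₀X
        (le_trans (mem_closedBall.mp hz) (by linarith))
    have hclB : ∀ w ∈ closedBall x₀ r, closedBall w r ⊆ K := by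
      intro w hw z hz
      apply mem_cthickening_of_dist_le z x₀ _ _ hx₀X
      calc dist z x₀ ≤ dist z w + dist w x₀ := dist_triangle _ _ _
        _ ≤ r + r := add_le_add (mem_closedBall.mp hz) (mem_closedBall.mp hw)
        _ ≤ 3 * r := by linarith
    have hvderiv : ∀ w ∈ closedBall x₀ r, ‖deriv v w‖ ≤ 1 := by
      intro w hw
      have hdiffOn : DifferentiableOn ℂ v K := fun z hz => (hvdiff z hz).differentiableWithinAt
      have hdc : DiffContOnCl ℂ v (ball w r) := hdiffOn.diffContOnCl_ball (hclB w hw)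
      have hsb : ∀ z ∈ sphere w r, ‖v z‖ ≤ r := by
        intro z hz
        have hzK : z ∈ K := hclB w hw (sphere_subset_closedBall hz)
        exact (hvsmall z hzK).le
      have hle := Complex.norm_deriv_le_of_forall_mem_sphere_norm_le hrpos hdc hsb
      rwa [div_self hrpos.ne'] at hle
    have hvlip : ‖v a - v b‖ ≤ 1 * ‖a - b‖ :=
      (convex_closedBall x₀ r).norm_image_sub_le_of_norm_deriv_le
        (fun w hw => hvdiff w (hballx₀K hw)) hvderiv hbB haB
    have hGx₀X : G x₀ ∈ X := hXf.iterate k hx₀X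
    have hconj1 := conj_iterate F lam₀ lam X h₁ hXf (hm₁.2.2.2.2 lam hlN) k x₀ hx₀X
    have hconj2 := conj_iterate F lam₀ lam X h₂ hXf (hm₂.2.2.2.2 lam hlN) k x₀ hx₀X
    have hPab : ‖(F lam)^[k] a - (F lam)^[k] b‖ ≤ φ x₀ := by
      rw [hadef, hbdef, hconj1, hconj2]
      exact hmax hGx₀X
    have hexp3 : 3 * ‖a - b‖ ≤ ‖G a - G b‖ :=
      hexpG x₀ hx₀X a haB b hbB
    have hsplit : ‖G a - G b‖ ≤
        ‖(F lam)^[k] a - (F lam)^[k] b‖ + ‖v a - v b‖ := by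
      have heq : G a - G b = ((F lam)^[k] a - (F lam)^[k] b) - (v a - v b) := by
        rw [hv]; ring
      rw [heq]
      exact norm_sub_le _ _
    have hvab : ‖v a - v b‖ ≤ ‖a - b‖ := by
      rw [one_mul] at hvlip
      exact hvlip
    have hφx₀ : φ x₀ = ‖a - b‖ := rfl
    linarith
  have hle0 : φ x ≤ 0 := le_trans (hmax hx) hd0
  have h0 : φ x = 0 := le_antisymm hle0 (norm_nonneg _)
  rw [hφ] at h0
  simp only [norm_eq_zero, sub_eq_zero] at h0
  exact h0
end
end

section
/- Let Ω ⊆ ℂ be open, Λ an open subset of a complex Banach space, λ₀ ∈ Λ, and F : Λ × Ω → ℂ a continuous map which is holomorphic in each variable separately (z ↦ F(λ, z) is holomorphic on Ω for each λ, and λ ↦ F(λ, z) is holomorphic on Λ for each z); put f₀ := F(λ₀, ·), and let X ⊆ Ω be a hyperbolic set for f₀. Let N ⊆ Λ be a connected open neighborhood of λ₀ and h₁, h₂ : N × X → Ω two continuous maps such that for i = 1, 2: h_i(λ₀, x) = x for all x ∈ X, x ↦ h_i(λ, x) is injective on X for each λ ∈ N, λ ↦ h_i(λ, x) is holomorphic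 on N for each x ∈ X, and F(λ, h_i(λ, x)) = h_i(λ, f₀(x)) for all (λ, x) ∈ N × X. Then h₁ = h₂ on N × X. -/
open Filter Metric Set Topology

noncomputable section

set_option maxHeartbeats 1000000

section AuxLemmas

lemma aux_unif {E : Type*} [NormedAddCommGroup E] [NormedSpace ℂ E] {lam₀ : E}
    {P : Set E} {S K : Set ℂ}
    (u : E → ℂ → ℂ) (hc : ContinuousOn (fun p : E × ℂ => u p.1 p.2) (P ×ˢ S))
    (hKc : IsCompact K) (hKS : K ⊆ S) (hP : P ∈ 𝓝 lam₀) {ε : ℝ} (hε : 0 < ε) :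
    ∃ V : Set E, IsOpen V ∧ lam₀ ∈ V ∧
      ∀ lam ∈ V ∩ P, ∀ z ∈ K, dist (u lam z) (u lam₀ z) < ε := by
  have hl₀P : lam₀ ∈ P := mem_of_mem_nhds hP
  have key : ∀ z ∈ K, ∃ (A : Set E) (B : Set ℂ), IsOpen A ∧ IsOpen B ∧ lam₀ ∈ A ∧ z ∈ B ∧
      (∀ lam ∈ A ∩ P, ∀ y ∈ B ∩ S, dist (u lam y) (u lam₀ z) < ε / 2) ∧
      (∀ y ∈ B ∩ S, dist (u lam₀ y) (u lam₀ z) < ε / 2) := by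
    intro z hz
    have hzS : z ∈ S := hKS hz
    have h1 : ContinuousWithinAt (fun p : E × ℂ => u p.1 p.2) (P ×ˢ S) (lam₀, z) :=
      hc _ (Set.mk_mem_prod hl₀P hzS)
    have h2 : {p : E × ℂ | dist (u p.1 p.2) (u lam₀ z) < ε / 2} ∈ 𝓝[P ×ˢ S] (lam₀, z) :=
      h1 (Metric.ball_mem_nhds _ (by linarith))
    rw [mem_nhdsWithin] at h2
    obtain ⟨T, hTo, hTz, hT⟩ := h2
    obtain ⟨A, B, hAo, hBo, hA, hB, hAB⟩ := isOpen_prod_iff.mp hTo lam₀ z hTz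
    refine ⟨A, B, hAo, hBo, hA, hB, ?_, ?_⟩
    · intro lam hlam y hy
      have hmem1 : ((lam, y) : E × ℂ) ∈ T ∩ P ×ˢ S :=
        ⟨hAB (Set.mk_mem_prod hlam.1 hy.1), Set.mk_mem_prod hlam.2 hy.2⟩
      simpa only [Set.mem_setOf_eq] using hT hmem1
    · intro y hy
      have hmem : ((lam₀, y) : E × ℂ) ∈ T ∩ P ×ˢ S :=
        ⟨hAB (Set.mk_mem_prod hA hy.1), Set.mk_mem_prod hl₀P hy.2⟩
      simpa only [Set.mem_setOf_eq] using hT hmem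
  choose A B hAo hBo hA hB hest hest0 using key
  obtain ⟨t, hcov⟩ := hKc.elim_nhds_subcover' (fun z hz => B z hz)
    (fun z hz => (hBo z hz).mem_nhds (hB z hz))
  refine ⟨⋂ z ∈ t, A z z.2, isOpen_biInter_finset (fun z _ => hAo z z.2), ?_, ?_⟩
  · exact mem_biInter fun z _ => hA z z.2
  · intro lam hlam y hy
    obtain ⟨z, hzt, hyB⟩ := by
      have := hcov hy
      simpa only [mem_iUnion, exists_prop] using this
    have h1 := hest z z.2 lam ⟨(Set.mem_iInter₂.mp hlam.1) z hzt, hlam.2⟩ y ⟨hyB, hKS hy⟩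
    have h2 := hest0 z z.2 y ⟨hyB, hKS hy⟩
    calc dist (u lam y) (u lam₀ y) ≤ dist (u lam y) (u lam₀ z) + dist (u lam₀ y) (u lam₀ z) :=
          dist_triangle_right _ _ _
      _ < ε / 2 + ε / 2 := add_lt_add h1 h2
      _ = ε := by ring

lemma aux_iter {E : Type*} [NormedAddCommGroup E] [NormedSpace ℂ E]
    {Λ : Set E} (hΛ : IsOpen Λ) {lam₀ : E} (hl₀ : lam₀ ∈ Λ)
    {Ω : Set ℂ} (hΩ : IsOpen Ω) {F : E → ℂ → ℂ}
    (hFc : ContinuousOn (fun p : E × ℂ => F p.1 p.2) (Λ ×ˢ Ω))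
    (hFz : ∀ lam ∈ Λ, DifferentiableOn ℂ (F lam) Ω)
    {X : Set ℂ} (hXc : IsCompact X) (hXΩ : X ⊆ Ω) (hXi : Set.MapsTo (F lam₀) X X) :
    ∀ k : ℕ, ∃ (V : Set E) (U : Set ℂ), IsOpen V ∧ IsOpen U ∧ lam₀ ∈ V ∧ X ⊆ U ∧
      V ⊆ Λ ∧ U ⊆ Ω ∧
      ContinuousOn (fun p : E × ℂ => (F p.1)^[k] p.2) (V ×ˢ U) ∧
      ∀ lam ∈ V, DifferentiableOn ℂ ((F lam)^[k]) U := by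
  intro k
  induction k with
  | zero =>
    refine ⟨Λ, Ω, hΛ, hΩ, hl₀, hXΩ, subset_rfl, subset_rfl, ?_, ?_⟩
    · simpa using continuous_snd.continuousOn
    · intro lam _
      simpa using differentiableOn_id
  | succ k ih =>
    obtain ⟨V, U, hVo, hUo, hl₀V, hXU, hVΛ, hUΩ, hcont, hdiff⟩ := ih
    set Φ : E × ℂ → E × ℂ := fun p => (p.1, F p.1 p.2) with hΦ
    have hΦc : ContinuousOn Φ (Λ ×ˢ Ω) := continuous_fst.continuousOn.prodMk hFc
    set Sdom : Set (E × ℂ) := (Λ ×ˢ Ω) ∩ Φ ⁻¹' (V ×ˢ U) with hS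
    have hSo : IsOpen Sdom := hΦc.isOpen_inter_preimage (hΛ.prod hΩ) (hVo.prod hUo)
    have hsub : ({lam₀} : Set E) ×ˢ X ⊆ Sdom := by
      rintro ⟨lam, x⟩ ⟨hlam, hx⟩
      rcases Set.mem_singleton_iff.mp hlam with rfl
      exact ⟨Set.mk_mem_prod hl₀ (hXΩ hx), Set.mk_mem_prod hl₀V (hXU (hXi hx))⟩
    obtain ⟨A, B, hAo, hBo, hA, hB, hAB⟩ :=
      generalized_tube_lemma isCompact_singleton hXc hSo hsub
    have hl₀A : lam₀ ∈ A := hA rfl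
    refine ⟨A ∩ V, B ∩ Ω, hAo.inter hVo, hBo.inter hΩ, ⟨hl₀A, hl₀V⟩, fun x hx => ⟨hB hx, hXΩ hx⟩,
      (Set.inter_subset_right).trans hVΛ, Set.inter_subset_right, ?_, ?_⟩
    · have hmaps : Set.MapsTo Φ ((A ∩ V) ×ˢ (B ∩ Ω)) (V ×ˢ U) := by
        rintro ⟨lam, z⟩ ⟨hlam, hz⟩
        exact (hAB (Set.mk_mem_prod hlam.1 hz.1)).2
      have h1 : ContinuousOn ((fun q : E × ℂ => (F q.1)^[k] q.2) ∘ Φ) ((A ∩ V) ×ˢ (B ∩ Ω)) :=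
        hcont.comp (hΦc.mono (fun p hp => ⟨(Set.inter_subset_right : A ∩ V ⊆ V).trans hVΛ hp.1,
          hp.2.2⟩)) hmaps
      refine h1.congr ?_
      rintro ⟨lam, z⟩ _
      simp [Function.comp, Φ, Function.iterate_succ_apply]
    · intro lam hlam
      have hmapz : Set.MapsTo (F lam) (B ∩ Ω) U := by
        intro z hz
        exact (hAB (Set.mk_mem_prod hlam.1 hz.1)).2.2
      have : DifferentiableOn ℂ ((F lam)^[k] ∘ F lam) (B ∩ Ω) :=
        (hdiff lam hlam.2).comp ((hFz lam (hVΛ hlam.2)).mono Set.inter_subset_right) hmapz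
      rw [Function.iterate_succ]
      exact this

/-- identity theorem for ℂ-valued differentiable functions on open preconnected subsets of
a complex normed space, given vanishing on a nonempty open subset. -/
lemma aux_identity {E : Type*} [NormedAddCommGroup E] [NormedSpace ℂ E]
    {d : E → ℂ} {N W : Set E} (hN : IsOpen N) (hNc : IsPreconnected N)
    (hd : DifferentiableOn ℂ d N) (hW : IsOpen W) {lam₀ : E} (h0 : lam₀ ∈ W) (hWN : W ⊆ N)
    (hz : ∀ lam ∈ W, d lam = 0) : ∀ lam ∈ N, d lam = 0 := by
  -- key 1-D step
  have claim : ∀ (lam₂ : E) (r : ℝ), 0 < r → ball lam₂ r ⊆ N → (∀ᶠ μ in 𝓝 lam₂, d μ = 0) →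
      ∀ μ ∈ ball lam₂ r, d μ = 0 := by
    intro lam₂ r hr hBN hev μ hμ
    rcases eq_or_ne μ lam₂ with rfl | hne
    · exact hev.self_of_nhds
    set v : E := μ - lam₂ with hv
    have hvne : v ≠ 0 := sub_ne_zero.mpr hne
    have hvpos : 0 < ‖v‖ := norm_pos_iff.mpr hvne
    set R : ℝ := r / ‖v‖ with hR
    have hvr : ‖v‖ < r := by
      have := mem_ball_iff_norm.mp hμ
      simpa using this
    have hR1 : 1 < R := (one_lt_div hvpos).mpr hvr
    have hRpos : 0 < R := lt_trans one_pos hR1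
    set L : ℂ → E := fun ζ => lam₂ + ζ • v with hL
    have hLc : Continuous L := continuous_const.add (continuous_id.smul continuous_const)
    have hmaps : Set.MapsTo L (ball (0 : ℂ) R) (ball lam₂ r) := by
      intro ζ hζ
      have : ‖ζ‖ < R := by simpa using mem_ball_iff_norm.mp hζ
      have h1 : ‖ζ • v‖ = ‖ζ‖ * ‖v‖ := norm_smul _ _
      have h2 : ‖ζ‖ * ‖v‖ < R * ‖v‖ := by
        exact mul_lt_mul_of_pos_right this hvpos
      have h3 : R * ‖v‖ = r := div_mul_cancel₀ r (ne_of_gt hvpos)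
      rw [mem_ball_iff_norm]
      simp only [hL, add_sub_cancel_left]
      rw [h1] at *
      linarith
    set g : ℂ → ℂ := fun ζ => d (L ζ) with hg
    have hgd : DifferentiableOn ℂ g (ball (0 : ℂ) R) := by
      have hLd : Differentiable ℂ L := (differentiable_id.smul_const v).const_add lam₂
      exact (hd.mono (hBN)).comp hLd.differentiableOn (fun ζ hζ => hmaps hζ)
    have hga : AnalyticOnNhd ℂ g (ball (0 : ℂ) R) := hgd.analyticOnNhd isOpen_ball
    have hgev : g =ᶠ[𝓝 (0 : ℂ)] 0 := by
      have hL0 : Filter.Tendsto L (𝓝 0) (𝓝 lam₂) := by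
        have := hLc.tendsto (0 : ℂ)
        simpa [hL] using this
      filter_upwards [hL0.eventually hev] with ζ hζ
      exact hζ
    have := hga.eqOn_zero_of_preconnected_of_eventuallyEq_zero
      (convex_ball (0:ℂ) R).isPreconnected (mem_ball_self hRpos) hgev
    have h1 : (1 : ℂ) ∈ ball (0 : ℂ) R := by
      rw [mem_ball_iff_norm]
      simpa using hR1
    have := this h1
    simpa [hg, hL, hv] using this
  -- clopen argument
  set S : Set E := {lam | ∀ᶠ μ in 𝓝 lam, d μ = 0} with hSdef
  have hSo : IsOpen S := by
    rw [isOpen_iff_mem_nhds]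
    intro lam hlam
    rcases _root_.eventually_nhds_iff.mp hlam with ⟨T, hT, hTo, hlamT⟩
    exact mem_of_superset (hTo.mem_nhds hlamT)
      (fun μ hμ => _root_.eventually_nhds_iff.mpr ⟨T, hT, hTo, hμ⟩)
  have hNS : N ⊆ S := by
    apply hNc.subset_of_closure_inter_subset hSo
    · refine ⟨lam₀, hWN h0, ?_⟩
      exact _root_.eventually_nhds_iff.mpr ⟨W, hz, hW, h0⟩
    · rintro lam₁ ⟨hcl, hN₁⟩
      obtain ⟨r, hrpos, hball⟩ := Metric.isOpen_iff.mp hN lam₁ hN₁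
      obtain ⟨lam₂, hlam₂b, hlam₂S⟩ :=
        _root_.mem_closure_iff.mp hcl (ball lam₁ (r / 2)) isOpen_ball (mem_ball_self (by linarith))
      have hbb : ball lam₂ (r / 2) ⊆ ball lam₁ r := by
        apply ball_subset_ball'
        have := mem_ball.mp hlam₂b
        linarith [this]
      have hzero : ∀ μ ∈ ball lam₂ (r / 2), d μ = 0 :=
        claim lam₂ (r / 2) (by linarith) (hbb.trans hball) hlam₂S
      have hlam₁b : lam₁ ∈ ball lam₂ (r / 2) := by
        rw [mem_ball, dist_comm]
        exact mem_ball.mp hlam₂b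
      exact _root_.eventually_nhds_iff.mpr ⟨ball lam₂ (r / 2), hzero, isOpen_ball, hlam₁b⟩
  intro lam hlam
  exact (hNS hlam).self_of_nhds

lemma aux_mvt {φ : ℂ → ℂ} {U : Set ℂ} (hUo : IsOpen U) (hφ : DifferentiableOn ℂ φ U)
    {x : ℂ} {ρ : ℝ} (hball : closedBall x ρ ⊆ U) {a : ℂ} {C : ℝ}
    (hC : ∀ w ∈ closedBall x ρ, ‖deriv φ w - a‖ ≤ C)
    {y y' : ℂ} (hy : y ∈ closedBall x ρ) (hy' : y' ∈ closedBall x ρ) :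
    ‖φ y - φ y' - a * (y - y')‖ ≤ C * ‖y - y'‖ := by
  set ψ : ℂ → ℂ := fun w => φ w - a * w with hψ
  have hder : ∀ w ∈ closedBall x ρ, HasDerivWithinAt ψ (deriv φ w - a) (closedBall x ρ) w := by
    intro w hw
    have h1 : HasDerivAt φ (deriv φ w) w :=
      (hφ.differentiableAt (hUo.mem_nhds (hball hw))).hasDerivAt
    have h2 : HasDerivAt (fun w : ℂ => a * w) a w := by
      simpa using (hasDerivAt_id w).const_mul a
    exact (h1.sub h2).hasDerivWithinAt
  have := (convex_closedBall x ρ).norm_image_sub_le_of_norm_hasDerivWithin_le hder hC hy' hy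
  calc ‖φ y - φ y' - a * (y - y')‖ = ‖ψ y - ψ y'‖ := by congr 1; simp only [hψ]; ring
    _ ≤ C * ‖y - y'‖ := this

theorem aux_local
    {E : Type*} [NormedAddCommGroup E] [NormedSpace ℂ E] [CompleteSpace E]
    (Λ : Set E) (hΛ : IsOpen Λ) (lam₀ : E) (hl₀ : lam₀ ∈ Λ)
    (Ω : Set ℂ) (hΩ : IsOpen Ω) (F : E → ℂ → ℂ)
    (hFc : ContinuousOn (fun p : E × ℂ => F p.1 p.2) (Λ ×ˢ Ω))
    (hFz : ∀ lam ∈ Λ, DifferentiableOn ℂ (F lam) Ω)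
    (X : Set ℂ)
    (hXc : IsCompact X) (hXΩ : X ⊆ Ω) (hXi : Set.MapsTo (F lam₀) X X)
    (c : ℝ) (hc : 0 < c) (μ : ℝ) (hμ : 1 < μ)
    (hbound : ∀ x ∈ X, ∀ k : ℕ, 1 ≤ k → c * μ ^ k ≤ ‖deriv ((F lam₀)^[k]) x‖)
    (N : Set E) (hNo : IsOpen N) (hN₀ : lam₀ ∈ N) (hNΛ : N ⊆ Λ)
    (h₁ h₂ : E → ℂ → ℂ)
    (hc₁ : ContinuousOn (fun p : E × ℂ => h₁ p.1 p.2) (N ×ˢ X))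
    (hc₂ : ContinuousOn (fun p : E × ℂ => h₂ p.1 p.2) (N ×ˢ X))
    (h0₁ : ∀ x ∈ X, h₁ lam₀ x = x) (h0₂ : ∀ x ∈ X, h₂ lam₀ x = x)
    (hcj₁ : ∀ lam ∈ N, ∀ x ∈ X, F lam (h₁ lam x) = h₁ lam (F lam₀ x))
    (hcj₂ : ∀ lam ∈ N, ∀ x ∈ X, F lam (h₂ lam x) = h₂ lam (F lam₀ x)) :
    ∃ Vfin : Set E, IsOpen Vfin ∧ lam₀ ∈ Vfin ∧
      ∀ lam ∈ Vfin ∩ N, ∀ x ∈ X, h₁ lam x = h₂ lam x := by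
  -- choose the power k
  obtain ⟨k, hk9, hk1⟩ : ∃ k : ℕ, 9 ≤ c * μ ^ k ∧ 1 ≤ k := by
    have h1 := (tendsto_pow_atTop_atTop_of_one_lt hμ).eventually_ge_atTop (9 / c)
    obtain ⟨k, hk, hk1⟩ := (h1.and (eventually_ge_atTop 1)).exists
    refine ⟨k, ?_, hk1⟩
    have := (div_le_iff₀ hc).mp hk
    nlinarith
  obtain ⟨V, U, hVo, hUo, hl₀V, hXU, hVΛ, hUΩ, hcont, hdiff⟩ :=
    aux_iter hΛ hl₀ hΩ hFc hFz hXc hXΩ hXi k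
  have hG0d : DifferentiableOn ℂ ((F lam₀)^[k]) U := hdiff lam₀ hl₀V
  have hG0a : AnalyticOnNhd ℂ ((F lam₀)^[k]) U := hG0d.analyticOnNhd hUo
  have hder_cont : ContinuousOn (deriv ((F lam₀)^[k])) U := (hG0a.deriv_of_isOpen hUo).continuousOn
  have hX9 : ∀ x ∈ X, (9 : ℝ) ≤ ‖deriv ((F lam₀)^[k]) x‖ := by
    intro x hx
    have := hbound x hx k hk1
    linarith
  -- open set where the derivative is > 8
  set U' : Set ℂ := U ∩ (fun z => ‖deriv ((F lam₀)^[k]) z‖) ⁻¹' (Set.Ioi 8) with hU'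
  have hU'o : IsOpen U' := hder_cont.norm.isOpen_inter_preimage hUo isOpen_Ioi
  have hXU' : X ⊆ U' := fun x hx => ⟨hXU hx, by simpa using lt_of_lt_of_le (by norm_num) (hX9 x hx)⟩
  obtain ⟨δ, hδpos, hδsub⟩ := hXc.exists_cthickening_subset_open hU'o hXU'
  set K : Set ℂ := cthickening δ X with hK
  have hKc : IsCompact K := hXc.cthickening
  have hKU : K ⊆ U := fun w hw => (hδsub hw).1
  have hK8 : ∀ w ∈ K, 8 < ‖deriv ((F lam₀)^[k]) w‖ := fun w hw => (hδsub hw).2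
  -- uniform continuity of the derivative on K
  have hu := hKc.uniformContinuousOn_of_continuous (hder_cont.mono hKU)
  rw [Metric.uniformContinuousOn_iff] at hu
  obtain ⟨ρ₀, hρ₀, hosc⟩ := hu 1 one_pos
  set ρ : ℝ := min δ (ρ₀ / 2) with hρ
  have hρpos : 0 < ρ := lt_min hδpos (by linarith)
  -- locally uniform convergence of values and derivatives
  have hTLU : TendstoLocallyUniformlyOn (fun lam => (F lam)^[k]) ((F lam₀)^[k]) (𝓝 lam₀) U := by
    rw [tendstoLocallyUniformlyOn_iff_forall_isCompact hUo]
    intro K' hK'U hK'c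
    rw [Metric.tendstoUniformlyOn_iff]
    intro ε hε
    obtain ⟨V', hV'o, hl₀V', hest⟩ :=
      aux_unif (fun lam => (F lam)^[k]) hcont hK'c hK'U (hVo.mem_nhds hl₀V) hε
    filter_upwards [((hV'o.inter hVo).mem_nhds ⟨hl₀V', hl₀V⟩ : V' ∩ V ∈ 𝓝 lam₀)] with lam hlam
    intro z hz
    rw [dist_comm]
    exact hest lam hlam z hz
  have hTLUd := hTLU.deriv
    (Filter.eventually_of_mem (hVo.mem_nhds hl₀V) (fun lam hlam => hdiff lam hlam)) hUo
  have hdK := (tendstoLocallyUniformlyOn_iff_forall_isCompact hUo).mp hTLUd K hKU hKc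
  rw [Metric.tendstoUniformlyOn_iff] at hdK
  obtain ⟨V₂, hV₂prop, hV₂o, hl₀V₂⟩ := _root_.eventually_nhds_iff.mp (hdK 1 one_pos)
  -- closeness of the two motions
  obtain ⟨W₁, hW₁o, hl₀W₁, hW₁⟩ := aux_unif h₁ hc₁ hXc subset_rfl (hNo.mem_nhds hN₀) hρpos
  obtain ⟨W₂, hW₂o, hl₀W₂, hW₂⟩ := aux_unif h₂ hc₂ hXc subset_rfl (hNo.mem_nhds hN₀) hρpos
  refine ⟨V ∩ V₂ ∩ W₁ ∩ W₂, ((hVo.inter hV₂o).inter hW₁o).inter hW₂o,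
    ⟨⟨⟨hl₀V, hl₀V₂⟩, hl₀W₁⟩, hl₀W₂⟩, ?_⟩
  rintro lam ⟨⟨⟨⟨hlamV, hlamV₂⟩, hlamW₁⟩, hlamW₂⟩, hlamN⟩
  rcases X.eq_empty_or_nonempty with rfl | hne
  · intro x hx
    exact absurd hx (Set.notMem_empty x)
  -- continuity of the distance function on X
  have hcont₁ : ContinuousOn (fun x => h₁ lam x) X :=
    hc₁.comp (Continuous.prodMk_right lam).continuousOn (fun x hx => ⟨hlamN, hx⟩)
  have hcont₂ : ContinuousOn (fun x => h₂ lam x) X :=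
    hc₂.comp (Continuous.prodMk_right lam).continuousOn (fun x hx => ⟨hlamN, hx⟩)
  have hφc : ContinuousOn (fun x => dist (h₁ lam x) (h₂ lam x)) X :=
    continuous_dist.comp_continuousOn (hcont₁.prodMk hcont₂)
  obtain ⟨x₀, hx₀X, hmax⟩ := hXc.exists_isMaxOn hne hφc
  have hDmax : ∀ x ∈ X, dist (h₁ lam x) (h₂ lam x) ≤ dist (h₁ lam x₀) (h₂ lam x₀) :=
    fun x hx => hmax hx
  suffices hD : dist (h₁ lam x₀) (h₂ lam x₀) ≤ 0 by
    intro x hx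
    exact dist_le_zero.mp (le_trans (hDmax x hx) hD)
  -- conjugacy iterates
  have hit : ∀ (h : E → ℂ → ℂ), (∀ lam' ∈ N, ∀ x ∈ X, F lam' (h lam' x) = h lam' (F lam₀ x)) →
      ∀ j : ℕ, ∀ x ∈ X, (F lam)^[j] (h lam x) = h lam ((F lam₀)^[j] x) := by
    intro h hconj j
    induction j with
    | zero => intro x _; simp
    | succ j ih =>
      intro x hx
      rw [Function.iterate_succ_apply, hconj lam hlamN x hx, ih _ (hXi hx),
        ← Function.iterate_succ_apply]
  -- the two image points lie in the closed ball around x₀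
  have hy₁ : dist (h₁ lam x₀) x₀ < ρ := by
    have := hW₁ lam ⟨hlamW₁, hlamN⟩ x₀ hx₀X
    rwa [h0₁ x₀ hx₀X] at this
  have hy₂ : dist (h₂ lam x₀) x₀ < ρ := by
    have := hW₂ lam ⟨hlamW₂, hlamN⟩ x₀ hx₀X
    rwa [h0₂ x₀ hx₀X] at this
  have hy₁b : h₁ lam x₀ ∈ closedBall x₀ ρ := mem_closedBall.mpr hy₁.le
  have hy₂b : h₂ lam x₀ ∈ closedBall x₀ ρ := mem_closedBall.mpr hy₂.le
  have hcb : closedBall x₀ ρ ⊆ K :=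
    (closedBall_subset_closedBall (min_le_left _ _)).trans (closedBall_subset_cthickening hx₀X δ)
  have hx₀K : x₀ ∈ K := hcb (mem_closedBall_self hρpos.le)
  -- derivative bounds
  have hbound3 : ∀ w ∈ closedBall x₀ ρ, ‖deriv ((F lam)^[k]) w - deriv ((F lam)^[k]) x₀‖ ≤ 3 := by
    intro w hw
    have hwK : w ∈ K := hcb hw
    have e1 : dist (deriv ((F lam₀)^[k]) w) (deriv ((F lam)^[k]) w) < 1 :=
      hV₂prop lam hlamV₂ w hwK
    have e2 : dist (deriv ((F lam₀)^[k]) x₀) (deriv ((F lam)^[k]) x₀) < 1 :=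
      hV₂prop lam hlamV₂ x₀ hx₀K
    have e3 : dist (deriv ((F lam₀)^[k]) w) (deriv ((F lam₀)^[k]) x₀) < 1 := by
      apply hosc w hwK x₀ hx₀K
      have h1 : dist w x₀ ≤ ρ := mem_closedBall.mp hw
      have h2 : ρ ≤ ρ₀ / 2 := min_le_right _ _
      linarith
    have := dist_triangle4 (deriv ((F lam)^[k]) w) (deriv ((F lam₀)^[k]) w)
      (deriv ((F lam₀)^[k]) x₀) (deriv ((F lam)^[k]) x₀)
    rw [← dist_eq_norm]
    rw [dist_comm] at e1
    linarith
  have ha8 : (8 : ℝ) ≤ ‖deriv ((F lam)^[k]) x₀‖ := by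
    have e2 : dist (deriv ((F lam₀)^[k]) x₀) (deriv ((F lam)^[k]) x₀) < 1 :=
      hV₂prop lam hlamV₂ x₀ hx₀K
    have h9 : (9 : ℝ) ≤ ‖deriv ((F lam₀)^[k]) x₀‖ := hX9 x₀ hx₀X
    have := norm_sub_norm_le (deriv ((F lam₀)^[k]) x₀) (deriv ((F lam)^[k]) x₀)
    rw [← dist_eq_norm] at this
    linarith
  -- mean value estimate and expansion
  have hGlam : DifferentiableOn ℂ ((F lam)^[k]) U := hdiff lam hlamV
  have hmv := aux_mvt hUo hGlam (hcb.trans hKU) hbound3 hy₁b hy₂b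
  have hnn : (0 : ℝ) ≤ ‖h₁ lam x₀ - h₂ lam x₀‖ := norm_nonneg _
  have hexp : 5 * ‖h₁ lam x₀ - h₂ lam x₀‖ ≤
      ‖(F lam)^[k] (h₁ lam x₀) - (F lam)^[k] (h₂ lam x₀)‖ := by
    have h1 : ‖deriv ((F lam)^[k]) x₀ * (h₁ lam x₀ - h₂ lam x₀)‖ =
        ‖deriv ((F lam)^[k]) x₀‖ * ‖h₁ lam x₀ - h₂ lam x₀‖ := norm_mul _ _
    have h2 := norm_sub_norm_le (deriv ((F lam)^[k]) x₀ * (h₁ lam x₀ - h₂ lam x₀))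
      ((F lam)^[k] (h₁ lam x₀) - (F lam)^[k] (h₂ lam x₀))
    have h4 : ‖deriv ((F lam)^[k]) x₀ * (h₁ lam x₀ - h₂ lam x₀) -
        ((F lam)^[k] (h₁ lam x₀) - (F lam)^[k] (h₂ lam x₀))‖ =
        ‖(F lam)^[k] (h₁ lam x₀) - (F lam)^[k] (h₂ lam x₀) -
        deriv ((F lam)^[k]) x₀ * (h₁ lam x₀ - h₂ lam x₀)‖ := norm_sub_rev _ _
    nlinarith [hmv, ha8, hnn, h1, h2, h4]
  -- conclude using the maximum
  have hx₁X : (F lam₀)^[k] x₀ ∈ X := (hXi.iterate k) hx₀X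
  have e₁ : (F lam)^[k] (h₁ lam x₀) = h₁ lam ((F lam₀)^[k] x₀) := hit h₁ hcj₁ k x₀ hx₀X
  have e₂ : (F lam)^[k] (h₂ lam x₀) = h₂ lam ((F lam₀)^[k] x₀) := hit h₂ hcj₂ k x₀ hx₀X
  have hle := hDmax _ hx₁X
  simp only [dist_eq_norm] at hle ⊢
  rw [e₁, e₂] at hexp
  have := le_trans hexp hle
  linarith

end AuxLemmas

/-- Global uniqueness of holomorphic conjugating motions of a hyperbolic set
over a connected open neighborhood of the base point, for a holomorphic family over an open
subset of a complex Banach space. -/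
theorem uniqueness_of_holomorphic_motions
    {E : Type*} [NormedAddCommGroup E] [NormedSpace ℂ E] [CompleteSpace E]
    (Λ : Set E) (hΛ : IsOpen Λ) (lam₀ : E) (hl₀ : lam₀ ∈ Λ)
    (Ω : Set ℂ) (hΩ : IsOpen Ω) (F : E → ℂ → ℂ)
    (hFc : ContinuousOn (fun p : E × ℂ => F p.1 p.2) (Λ ×ˢ Ω))
    (hFz : ∀ lam ∈ Λ, DifferentiableOn ℂ (F lam) Ω)
    (hFl : ∀ z ∈ Ω, DifferentiableOn ℂ (fun lam => F lam z) Λ)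
    (X : Set ℂ) (hX : IsHypSet (F lam₀) Ω X)
    (N : Set E) (hNo : IsOpen N) (hNc : IsConnected N) (hN₀ : lam₀ ∈ N) (hNΛ : N ⊆ Λ)
    (h₁ h₂ : E → ℂ → ℂ)
    (hm₁ : IsConjMotion F lam₀ Ω X N h₁) (hm₂ : IsConjMotion F lam₀ Ω X N h₂)
    (hh₁ : ∀ x ∈ X, DifferentiableOn ℂ (fun lam => h₁ lam x) N)
    (hh₂ : ∀ x ∈ X, DifferentiableOn ℂ (fun lam => h₂ lam x) N) :
    ∀ lam ∈ N, ∀ x ∈ X, h₁ lam x = h₂ lam x := by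
  obtain ⟨hXc, hXΩ, hXi, c, hc, μ, hμ, hbound⟩ := hX
  obtain ⟨hc₁, h0₁, -, -, hcj₁⟩ := hm₁
  obtain ⟨hc₂, h0₂, -, -, hcj₂⟩ := hm₂
  obtain ⟨Vf, hVfo, hl₀Vf, hloc⟩ := aux_local Λ hΛ lam₀ hl₀ Ω hΩ F hFc hFz X hXc hXΩ hXi
    c hc μ hμ hbound N hNo hN₀ hNΛ h₁ h₂ hc₁ hc₂ h0₁ h0₂ hcj₁ hcj₂
  intro lam hlamN x hx
  have hd : DifferentiableOn ℂ (fun lam' => h₁ lam' x - h₂ lam' x) N :=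
    (hh₁ x hx).sub (hh₂ x hx)
  have hzero := aux_identity hNo hNc.isPreconnected hd (hVfo.inter hNo)
    (⟨hl₀Vf, hN₀⟩ : lam₀ ∈ Vf ∩ N) Set.inter_subset_right
    (fun lam' hlam' => sub_eq_zero.mpr (hloc lam' hlam' x hx)) lam hlamN
  exact sub_eq_zero.mp hzero
end
end

section
/- Let e ≥ 0 be an integer and suppose that for each n ∈ ℕ we are given points a_{n,1}, …, a_{n,e} ∈ 𝔻 such that, for each k, a_{n,k} → α_k ∈ closure(𝔻) as n → ∞. Set S := {α_k : |α_k| = 1} ⊆ ∂𝔻 and assume 1 ∉ S. Let B_n be the fixed-point-centered Blaschke product with free zeros a_{n,1}, …, a_{n,e}, and let B⁰ be the fixed-point-centered Blaschke product whose free zeros are those α_k with |α_k| < 1. Then, viewed as rational self-maps of the Riemann sphere ℂ̂, the maps B_n converge to B⁰ uniformly on every compact subset of ℂ̂ ∖ S. -/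
open Filter Metric Set Topology

noncomputable section

/-- The fixed-point-centered Blaschke product with free zeros `a k`, `k ∈ s`, as a map
`ℂ → ℂ`: `B(z) = λ · z · ∏_{k ∈ s} (z - a k)/(1 - conj (a k) z)` where
`λ = ∏_{k ∈ s} (1 - conj (a k))/(1 - a k)` is the unique unimodular constant with `B 1 = 1`. -/
def blaschkeFun {e : ℕ} (s : Finset (Fin e)) (a : Fin e → ℂ) (z : ℂ) : ℂ :=
  (∏ k ∈ s, (1 - (starRingEnd ℂ) (a k)) / (1 - a k)) * z *
    ∏ k ∈ s, (z - a k) / (1 - (starRingEnd ℂ) (a k) * z)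

/-- The denominator of the Blaschke product, vanishing exactly at its poles. -/
def blaschkeDen {e : ℕ} (s : Finset (Fin e)) (a : Fin e → ℂ) (z : ℂ) : ℂ :=
  ∏ k ∈ s, (1 - (starRingEnd ℂ) (a k) * z)

/-- The Blaschke product viewed as a rational self-map of the Riemann sphere
`ℂ̂ = OnePoint ℂ` (it fixes `∞` since it fixes `0` and has degree `≥` its denominator's). -/
def blaschkeSphere {e : ℕ} (s : Finset (Fin e)) (a : Fin e → ℂ) (w : OnePoint ℂ) :
    OnePoint ℂ :=
  Option.elim (show Option ℂ from w) OnePoint.infty fun z =>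
    if blaschkeDen s a z = 0 then OnePoint.infty else OnePoint.some (blaschkeFun s a z)

/-- The standard stereographic embedding of the Riemann sphere `OnePoint ℂ` onto the unit
sphere in `ℝ³`. -/
def sphereEmbed (w : OnePoint ℂ) : ℝ × ℝ × ℝ :=
  Option.elim (show Option ℂ from w) ((0 : ℝ), (0 : ℝ), (1 : ℝ)) fun z =>
    (2 * z.re / (1 + ‖z‖ ^ 2), 2 * z.im / (1 + ‖z‖ ^ 2),
      (‖z‖ ^ 2 - 1) / (‖z‖ ^ 2 + 1))

/-- A (chordal-type) distance on the Riemann sphere inducing its compact Hausdorff topology,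
hence its unique compatible uniform structure. -/
def sphDist (u v : OnePoint ℂ) : ℝ := dist (sphereEmbed u) (sphereEmbed v)

lemma conj_mul_self_of_abs_one {α : ℂ} (h : ‖α‖ = 1) :
    (starRingEnd ℂ) α * α = 1 := by
  have := Complex.mul_conj α
  rw [mul_comm] at this
  rw [this, Complex.normSq_eq_norm_sq, h]; norm_num

lemma one_sub_conj_mul_ne {α z : ℂ} (h : ‖α‖ = 1) (hz : z ≠ α) :
    1 - (starRingEnd ℂ) α * z ≠ 0 := by
  intro hc
  apply hz
  have h1 : (starRingEnd ℂ) α * z = 1 := by linear_combination -hc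
  have h2 := conj_mul_self_of_abs_one h
  have hα : (starRingEnd ℂ) α ≠ 0 := by
    intro h0; rw [h0, zero_mul] at h2; exact zero_ne_one h2
  have : (starRingEnd ℂ) α * z = (starRingEnd ℂ) α * α := by rw [h1, h2]
  exact mul_left_cancel₀ hα this

lemma boundary_factor {α z : ℂ} (h : ‖α‖ = 1) (h1 : α ≠ 1) (hz : z ≠ α) :
    (1 - (starRingEnd ℂ) α) / (1 - α) * ((z - α) / (1 - (starRingEnd ℂ) α * z)) = 1 := by
  have hα1 : (1 : ℂ) - α ≠ 0 := sub_ne_zero.2 (Ne.symm h1)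
  have hd : (1 : ℂ) - (starRingEnd ℂ) α * z ≠ 0 := one_sub_conj_mul_ne h hz
  have hc := conj_mul_self_of_abs_one h
  field_simp
  linear_combination (1 - z) * hc

lemma blaschkeFun_eq_prod {e : ℕ} (s : Finset (Fin e)) (a : Fin e → ℂ) (z : ℂ) :
    blaschkeFun s a z =
      z * ∏ k ∈ s, ((1 - (starRingEnd ℂ) (a k)) / (1 - a k) *
        ((z - a k) / (1 - (starRingEnd ℂ) (a k) * z))) := by
  rw [blaschkeFun, Finset.prod_mul_distrib]; ring

lemma blaschkeFun_univ_eq {e : ℕ} {α : Fin e → ℂ} (hle : ∀ k, ‖α k‖ ≤ 1)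
    (h1 : ∀ k, ‖α k‖ = 1 → α k ≠ 1) {z : ℂ}
    (hz : ∀ k, ‖α k‖ = 1 → z ≠ α k) :
    blaschkeFun Finset.univ α z =
      blaschkeFun (Finset.univ.filter fun k => ‖α k‖ < 1) α z := by
  rw [blaschkeFun_eq_prod, blaschkeFun_eq_prod]
  congr 1
  refine (Finset.prod_subset (Finset.filter_subset _ _) ?_).symm
  intro k _ hk
  simp only [Finset.mem_filter, Finset.mem_univ, true_and, not_lt] at hk
  have habs : ‖α k‖ = 1 := le_antisymm (hle k) hk
  exact boundary_factor habs (h1 k habs) (hz k habs)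

lemma blaschkeDen_univ_zero_iff {e : ℕ} {α : Fin e → ℂ} {z : ℂ}
    (hz : ∀ k, ‖α k‖ = 1 → z ≠ α k) (hle : ∀ k, ‖α k‖ ≤ 1) :
    (blaschkeDen Finset.univ α z = 0 ↔
      blaschkeDen (Finset.univ.filter fun k => ‖α k‖ < 1) α z = 0) := by
  rw [blaschkeDen, blaschkeDen, Finset.prod_eq_zero_iff, Finset.prod_eq_zero_iff]
  constructor
  · rintro ⟨k, -, hk⟩
    refine ⟨k, ?_, hk⟩
    simp only [Finset.mem_filter, Finset.mem_univ, true_and]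
    rcases lt_or_eq_of_le (hle k) with h | h
    · exact h
    · exact absurd hk (one_sub_conj_mul_ne h (hz k h))
  · rintro ⟨k, -, hk⟩; exact ⟨k, Finset.mem_univ k, hk⟩

lemma blaschkeSphere_univ_eq {e : ℕ} {α : Fin e → ℂ} (hle : ∀ k, ‖α k‖ ≤ 1)
    (h1 : ∀ k, ‖α k‖ = 1 → α k ≠ 1) {w : OnePoint ℂ}
    (hw : ∀ k, ‖α k‖ = 1 → w ≠ OnePoint.some (α k)) :
    blaschkeSphere Finset.univ α w =
      blaschkeSphere (Finset.univ.filter fun k => ‖α k‖ < 1) α w := by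
  induction w using OnePoint.rec with
  | infty => rfl
  | coe z =>
    have hz : ∀ k, ‖α k‖ = 1 → z ≠ α k := by
      intro k hk hzz
      exact hw k hk (by rw [hzz])
    show (if _ then _ else _) = (if _ then _ else _)
    rw [blaschkeFun_univ_eq hle h1 hz]
    by_cases hd : blaschkeDen Finset.univ α z = 0
    · rw [if_pos hd, if_pos ((blaschkeDen_univ_zero_iff hz hle).1 hd)]
    · rw [if_neg hd, if_neg fun h => hd ((blaschkeDen_univ_zero_iff hz hle).2 h)]

lemma continuous_embedCoe : Continuous fun z : ℂ => sphereEmbed (OnePoint.some z) := by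
  have hne : ∀ z : ℂ, 1 + ‖z‖ ^ 2 ≠ 0 := by intro z; positivity
  have hne' : ∀ z : ℂ, ‖z‖ ^ 2 + 1 ≠ 0 := by intro z; positivity
  have habs : Continuous fun z : ℂ => ‖z‖ ^ 2 :=
    (continuous_norm.pow 2)
  refine Continuous.prodMk ?_ (Continuous.prodMk ?_ ?_)
  · exact ((continuous_const.mul Complex.continuous_re).div
      (continuous_const.add habs) hne)
  · exact ((continuous_const.mul Complex.continuous_im).div
      (continuous_const.add habs) hne)
  · exact ((habs.sub continuous_const).div (habs.add continuous_const) hne')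

lemma embed_dist_infty_le {v : ℂ} (hv : 1 ≤ ‖v‖) :
    dist (sphereEmbed (OnePoint.some v)) (sphereEmbed OnePoint.infty) ≤ 2 / ‖v‖ := by
  set r := ‖v‖ with hr
  have hr0 : 0 < r := lt_of_lt_of_le one_pos hv
  have key : ∀ x y : ℝ, |x - y| ≤ 2 / r → dist x y ≤ 2 / r := by
    intro x y h; rwa [Real.dist_eq]
  have h1 : |2 * v.re / (1 + r ^ 2) - 0| ≤ 2 / r := by
    rw [sub_zero, abs_div]
    rw [abs_of_pos (by positivity : (0:ℝ) < 1 + r ^ 2)]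
    rw [div_le_div_iff₀ (by positivity) hr0]
    have : |2 * v.re| ≤ 2 * r := by
      rw [abs_mul]
      have := Complex.abs_re_le_norm v
      calc |(2:ℝ)| * |v.re| = 2 * |v.re| := by norm_num
        _ ≤ 2 * r := by nlinarith
    nlinarith
  have h2 : |2 * v.im / (1 + r ^ 2) - 0| ≤ 2 / r := by
    rw [sub_zero, abs_div]
    rw [abs_of_pos (by positivity : (0:ℝ) < 1 + r ^ 2)]
    rw [div_le_div_iff₀ (by positivity) hr0]
    have : |2 * v.im| ≤ 2 * r := by
      rw [abs_mul]
      have := Complex.abs_im_le_norm v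
      calc |(2:ℝ)| * |v.im| = 2 * |v.im| := by norm_num
        _ ≤ 2 * r := by nlinarith
    nlinarith
  have h3 : |(r ^ 2 - 1) / (r ^ 2 + 1) - 1| ≤ 2 / r := by
    have he : (r ^ 2 - 1) / (r ^ 2 + 1) - 1 = -2 / (r ^ 2 + 1) := by
      field_simp; ring
    rw [he, abs_div]
    rw [abs_of_pos (by positivity : (0:ℝ) < r ^ 2 + 1)]
    rw [div_le_div_iff₀ (by positivity) hr0]
    have : |(-2:ℝ)| = 2 := by norm_num
    nlinarith
  show dist (_, _, _) ((0:ℝ), (0:ℝ), (1:ℝ)) ≤ 2 / r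
  rw [Prod.dist_eq, Prod.dist_eq]
  exact max_le (key _ _ h1) (max_le (key _ _ h2) (key _ _ h3))

lemma tendsto_embed_infty {ι : Type*} {l : Filter ι} {g : ι → OnePoint ℂ}
    (h : ∀ M : ℝ, ∀ᶠ i in l, g i = OnePoint.infty ∨
      ∃ v, g i = OnePoint.some v ∧ M ≤ ‖v‖) :
    Tendsto (fun i => sphereEmbed (g i)) l (𝓝 (sphereEmbed OnePoint.infty)) := by
  rw [Metric.tendsto_nhds]
  intro ε hε
  filter_upwards [h (max 1 (2 / ε) + 1)] with i hi
  rcases hi with hh | ⟨v, hv, hM⟩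
  · rw [hh]; simpa using hε
  · rw [hv]
    have h1 : 1 ≤ ‖v‖ := by have := le_max_left 1 (2/ε); linarith
    have h2 : 2 / ε < ‖v‖ := by have := le_max_right 1 (2/ε); linarith
    calc dist (sphereEmbed (OnePoint.some v)) (sphereEmbed OnePoint.infty)
        ≤ 2 / ‖v‖ := embed_dist_infty_le h1
      _ < ε := by
          rw [div_lt_iff₀ (by linarith)]
          rw [div_lt_iff₀ hε] at h2
          nlinarith

lemma key_unif {X P M : Type*} [TopologicalSpace X] [TopologicalSpace P] [PseudoMetricSpace M]
    {K : Set X} (hK : IsCompact K) {T : Set (P × X)} {α : P} {a : ℕ → P}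
    (hconv : Tendsto a atTop (𝓝 α)) (haT : ∀ n x, x ∈ K → (a n, x) ∈ T)
    (hαT : ∀ w ∈ K, (α, w) ∈ T)
    {f : P × X → M}
    (hf : ∀ w ∈ K, ContinuousWithinAt f T (α, w)) :
    ∀ ε : ℝ, 0 < ε → ∀ᶠ n in atTop, ∀ w ∈ K, dist (f (a n, w)) (f (α, w)) < ε := by
  intro ε hε
  have h : ∀ w ∈ K, ∃ U ∈ 𝓝 α, ∃ V ∈ 𝓝 w,
      ∀ p ∈ T, p ∈ U ×ˢ V → dist (f p) (f (α, w)) < ε / 2 := by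
    intro w hw
    have hb := hf w hw (Metric.ball_mem_nhds (f (α, w)) (by linarith : (0:ℝ) < ε / 2))
    rw [Filter.mem_map, mem_nhdsWithin] at hb
    obtain ⟨u, hu, hmemu, hsub⟩ := hb
    obtain ⟨U, hU, V, hV, hUV⟩ := mem_nhds_prod_iff.1 (hu.mem_nhds hmemu)
    exact ⟨U, hU, V, hV, fun p hpT hpUV => hsub ⟨hUV hpUV, hpT⟩⟩
  choose! U hU V hV hball using h
  obtain ⟨t, htK, hcov⟩ := hK.elim_nhds_subcover V (fun w hw => hV w hw)
  have hUall : (⋂ w ∈ t, U w) ∈ 𝓝 α :=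
    (Filter.biInter_finset_mem t).2 fun w hw => hU w (htK w hw)
  filter_upwards [hconv.eventually_mem hUall] with n hn
  intro w hw
  obtain ⟨w₀, hw₀t, hwV⟩ := Set.mem_iUnion₂.1 (hcov hw)
  have hw₀K := htK w₀ hw₀t
  have hαU : α ∈ U w₀ := mem_of_mem_nhds (hU w₀ hw₀K)
  have hd1 : dist (f (a n, w)) (f (α, w₀)) < ε / 2 :=
    hball w₀ hw₀K (a n, w) (haT n w hw) ⟨(Set.mem_iInter₂.1 hn) w₀ hw₀t, hwV⟩
  have hd2 : dist (f (α, w)) (f (α, w₀)) < ε / 2 :=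
    hball w₀ hw₀K (α, w) (hαT w hw) ⟨hαU, hwV⟩
  calc dist (f (a n, w)) (f (α, w)) ≤ _ + _ := dist_triangle_right _ _ _
    _ < ε := by linarith

lemma abs_lambda {w : ℂ} (hw : w ≠ 1) :
    ‖(1 - (starRingEnd ℂ) w) / (1 - w)‖ = 1 := by
  have h1 : (1 : ℂ) - w ≠ 0 := sub_ne_zero.2 (Ne.symm hw)
  rw [norm_div]
  have : (1 : ℂ) - (starRingEnd ℂ) w = (starRingEnd ℂ) (1 - w) := by
    rw [map_sub, map_one]
  rw [this, Complex.norm_conj, div_self (norm_ne_zero_iff.mpr h1)]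

lemma blaschkeFun_lower {e : ℕ} {b : Fin e → ℂ} {z : ℂ}
    (hb : ∀ k, ‖b k‖ ≤ 2) (hb1 : ∀ k, b k ≠ 1)
    (hz : 3 ≤ ‖z‖) (hden : blaschkeDen Finset.univ b z ≠ 0) :
    ‖z‖ / 9 ^ e ≤ ‖blaschkeFun Finset.univ b z‖ := by
  have hfac : ∀ k : Fin e, (1 : ℂ) - (starRingEnd ℂ) (b k) * z ≠ 0 := by
    intro k
    intro hc
    exact hden (Finset.prod_eq_zero (Finset.mem_univ k) hc)
  rw [blaschkeFun, norm_mul, norm_mul, norm_prod, norm_prod]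
  have hlam : ∏ k : Fin e, ‖(1 - (starRingEnd ℂ) (b k)) / (1 - b k)‖ = 1 := by
    rw [Finset.prod_eq_one]
    intro k _
    exact abs_lambda (hb1 k)
  rw [hlam, one_mul]
  have hm : ∀ k : Fin e, (1 : ℝ) / 9 ≤ ‖(z - b k) / (1 - (starRingEnd ℂ) (b k) * z)‖ := by
    intro k
    rw [norm_div]
    have hnum : ‖z‖ - 2 ≤ ‖z - b k‖ := by
      have h := norm_add_le (z - b k) (b k)
      rw [sub_add_cancel] at h
      have := hb k
      linarith
    have hde : ‖1 - (starRingEnd ℂ) (b k) * z‖ ≤ 1 + 2 * ‖z‖ := by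
      calc ‖1 - (starRingEnd ℂ) (b k) * z‖
          ≤ ‖(1:ℂ)‖ + ‖(starRingEnd ℂ) (b k) * z‖ :=
            norm_sub_le _ _
        _ ≤ 1 + 2 * ‖z‖ := by
            rw [norm_one, norm_mul, Complex.norm_conj]
            have := hb k
            have := norm_nonneg z
            nlinarith
    have hdpos : 0 < ‖1 - (starRingEnd ℂ) (b k) * z‖ :=
      norm_pos_iff.mpr (hfac k)
    rw [one_div, le_div_iff₀ hdpos, ← one_div]
    have : (1 : ℝ) / 9 * (1 + 2 * ‖z‖) ≤ ‖z‖ - 2 := by linarith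
    nlinarith [norm_nonneg (1 - (starRingEnd ℂ) (b k) * z)]
  have hprod : ((1 : ℝ) / 9) ^ e ≤ ∏ k : Fin e, ‖(z - b k) / (1 - (starRingEnd ℂ) (b k) * z)‖ := by
    calc ((1 : ℝ) / 9) ^ e = ∏ _k : Fin e, (1 : ℝ) / 9 := by
          rw [Finset.prod_const, Finset.card_univ, Fintype.card_fin]
      _ ≤ _ := Finset.prod_le_prod (fun k _ => by norm_num) (fun k _ => hm k)
  calc ‖z‖ / 9 ^ e = ‖z‖ * ((1:ℝ)/9) ^ e := by
        rw [div_pow, one_pow, mul_one_div]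
    _ ≤ ‖z‖ * ∏ k : Fin e, ‖(z - b k) / (1 - (starRingEnd ℂ) (b k) * z)‖ := by
        apply mul_le_mul_of_nonneg_left hprod (norm_nonneg z)
    _ = _ := rfl

lemma tendsto_infty_case {e : ℕ} {α : Fin e → ℂ} (hle : ∀ k, ‖α k‖ ≤ 1)
    (hα1 : ∀ k, α k ≠ 1) :
    Tendsto (fun p : (Fin e → ℂ) × OnePoint ℂ =>
        sphereEmbed (blaschkeSphere Finset.univ p.1 p.2))
      (𝓝 (α, OnePoint.infty)) (𝓝 (sphereEmbed OnePoint.infty)) := by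
  apply tendsto_embed_infty
  intro M
  have hA : ∀ᶠ b in 𝓝 α, ∀ k, ‖b k‖ ≤ 2 ∧ b k ≠ 1 := by
    rw [eventually_all]
    intro k
    have hcont : Tendsto (fun b : Fin e → ℂ => b k) (𝓝 α) (𝓝 (α k)) :=
      (continuous_apply k).tendsto α
    refine hcont.eventually (p := fun w => ‖w‖ ≤ 2 ∧ w ≠ 1) ?_
    have hopen : IsOpen {w : ℂ | ‖w‖ < 2 ∧ w ≠ 1} :=
      IsOpen.inter (isOpen_lt continuous_norm continuous_const) isOpen_ne
    have hmem : α k ∈ {w : ℂ | ‖w‖ < 2 ∧ w ≠ 1} :=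
      ⟨lt_of_le_of_lt (hle k) one_lt_two, hα1 k⟩
    filter_upwards [hopen.mem_nhds hmem] with w hw
    exact ⟨le_of_lt hw.1, hw.2⟩
  have h9 : (0:ℝ) < 9 ^ e := by positivity
  set R : ℝ := max 3 (M * 9 ^ e) with hR
  have hB : {w : OnePoint ℂ | w = OnePoint.infty ∨
      ∃ v : ℂ, w = OnePoint.some v ∧ R ≤ ‖v‖} ∈ 𝓝 (OnePoint.infty : OnePoint ℂ) := by
    apply (OnePoint.hasBasis_nhds_infty.mem_iff).2
    refine ⟨Metric.closedBall 0 R, ⟨Metric.isClosed_closedBall, isCompact_closedBall 0 R⟩, ?_⟩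
    rintro w (⟨v, hv, rfl⟩ | hw)
    · refine Or.inr ⟨v, rfl, ?_⟩
      simp only [Set.mem_compl_iff, Metric.mem_closedBall, not_le, Complex.dist_eq,
        sub_zero] at hv
      exact le_of_lt hv
    · exact Or.inl hw
  rw [nhds_prod_eq]
  filter_upwards [Filter.prod_mem_prod hA hB] with p hp
  obtain ⟨hp1, hp2⟩ := hp
  rcases hp2 with hinf | ⟨v, hv, hvR⟩
  · rw [hinf]; exact Or.inl rfl
  · rw [hv]
    by_cases hd : blaschkeDen Finset.univ p.1 v = 0
    · refine Or.inl ?_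
      show (if _ then _ else _) = _
      rw [if_pos hd]
    · refine Or.inr ⟨blaschkeFun Finset.univ p.1 v, ?_, ?_⟩
      · show (if _ then _ else _) = _
        rw [if_neg hd]
      · have h3 : (3:ℝ) ≤ ‖v‖ := le_trans (le_max_left _ _) hvR
        have := blaschkeFun_lower (fun k => (hp1 k).1) (fun k => (hp1 k).2) h3 hd
        have hM : M ≤ ‖v‖ / 9 ^ e := by
          rw [le_div_iff₀ h9]
          exact le_trans (le_max_right 3 (M * 9 ^ e)) hvR
        linarith

lemma contAt_blaschkeFun {e : ℕ} {α : Fin e → ℂ} {z₀ : ℂ}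
    (hα1 : ∀ k, (1 : ℂ) - α k ≠ 0)
    (hden : ∀ k, (1 : ℂ) - (starRingEnd ℂ) (α k) * z₀ ≠ 0) :
    ContinuousAt (fun p : (Fin e → ℂ) × ℂ => blaschkeFun Finset.univ p.1 p.2) (α, z₀) := by
  have hc1 : ∀ k, ContinuousAt (fun p : (Fin e → ℂ) × ℂ => p.1 k) (α, z₀) :=
    fun k => ((continuous_apply k).comp continuous_fst).continuousAt
  have hc2 : ContinuousAt (fun p : (Fin e → ℂ) × ℂ => p.2) (α, z₀) :=
    continuous_snd.continuousAt
  have hconj : Continuous (starRingEnd ℂ) := Complex.continuous_conj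
  unfold blaschkeFun
  apply ContinuousAt.mul
  apply ContinuousAt.mul
  · exact tendsto_finset_prod Finset.univ fun k _ =>
      ((continuousAt_const.sub ((hconj.continuousAt).comp (hc1 k))).div
        (continuousAt_const.sub (hc1 k)) (hα1 k))
  · exact hc2
  · exact tendsto_finset_prod Finset.univ fun k _ =>
      ((hc2.sub (hc1 k)).div
        (continuousAt_const.sub (((hconj.continuousAt).comp (hc1 k)).mul hc2)) (hden k))

lemma contAt_blaschkeDen {e : ℕ} {α : Fin e → ℂ} {z₀ : ℂ} :
    ContinuousAt (fun p : (Fin e → ℂ) × ℂ => blaschkeDen Finset.univ p.1 p.2) (α, z₀) := by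
  have hc1 : ∀ k, ContinuousAt (fun p : (Fin e → ℂ) × ℂ => p.1 k) (α, z₀) :=
    fun k => ((continuous_apply k).comp continuous_fst).continuousAt
  have hconj : Continuous (starRingEnd ℂ) := Complex.continuous_conj
  unfold blaschkeDen
  exact tendsto_finset_prod Finset.univ fun k _ =>
    continuousAt_const.sub (((hconj.continuousAt).comp (hc1 k)).mul continuous_snd.continuousAt)

lemma tendsto_sphere_reg {e : ℕ} {α : Fin e → ℂ} {z₀ : ℂ}
    (hα1 : ∀ k, (1 : ℂ) - α k ≠ 0)
    (hden : ∀ k, (1 : ℂ) - (starRingEnd ℂ) (α k) * z₀ ≠ 0) :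
    Tendsto (fun p : (Fin e → ℂ) × ℂ =>
        sphereEmbed (blaschkeSphere Finset.univ p.1 (OnePoint.some p.2)))
      (𝓝 (α, z₀)) (𝓝 (sphereEmbed (OnePoint.some (blaschkeFun Finset.univ α z₀)))) := by
  have hD0 : blaschkeDen Finset.univ α z₀ ≠ 0 :=
    Finset.prod_ne_zero_iff.2 fun k _ => hden k
  have hDev : ∀ᶠ p : (Fin e → ℂ) × ℂ in 𝓝 (α, z₀),
      blaschkeDen Finset.univ p.1 p.2 ≠ 0 :=
    contAt_blaschkeDen.eventually_ne hD0
  have hmain : Tendsto (fun p : (Fin e → ℂ) × ℂ =>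
      sphereEmbed (OnePoint.some (blaschkeFun Finset.univ p.1 p.2))) (𝓝 (α, z₀))
      (𝓝 (sphereEmbed (OnePoint.some (blaschkeFun Finset.univ α z₀)))) :=
    (continuous_embedCoe.continuousAt).comp (contAt_blaschkeFun hα1 hden)
  apply hmain.congr'
  filter_upwards [hDev] with p hp
  show sphereEmbed (OnePoint.some _) = sphereEmbed (if _ then _ else _)
  rw [if_neg hp]

lemma blaschkeFun_eq_div {e : ℕ} (s : Finset (Fin e)) (b : Fin e → ℂ) (z : ℂ) :
    blaschkeFun s b z =
      ((∏ k ∈ s, (1 - (starRingEnd ℂ) (b k)) / (1 - b k)) * z * ∏ k ∈ s, (z - b k)) /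
        blaschkeDen s b z := by
  rw [blaschkeFun, blaschkeDen]
  simp only [Finset.prod_div_distrib]
  rw [mul_div_assoc]

lemma tendsto_sphere_pole {e : ℕ} {α : Fin e → ℂ} {z₀ : ℂ}
    (hα1 : ∀ k, (1 : ℂ) - α k ≠ 0) (hconj : ∀ k, (1 : ℂ) - (starRingEnd ℂ) (α k) ≠ 0)
    (hnum : ∀ k, z₀ - α k ≠ 0) (hz0 : z₀ ≠ 0)
    (hDen0 : blaschkeDen Finset.univ α z₀ = 0) :
    Tendsto (fun p : (Fin e → ℂ) × ℂ =>
        sphereEmbed (blaschkeSphere Finset.univ p.1 (OnePoint.some p.2)))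
      (𝓝 (α, z₀)) (𝓝 (sphereEmbed OnePoint.infty)) := by
  set N : (Fin e → ℂ) × ℂ → ℂ := fun p =>
    (∏ k : Fin e, (1 - (starRingEnd ℂ) (p.1 k)) / (1 - p.1 k)) * p.2 *
      ∏ k : Fin e, (p.2 - p.1 k) with hN
  have hc1 : ∀ k, ContinuousAt (fun p : (Fin e → ℂ) × ℂ => p.1 k) (α, z₀) :=
    fun k => ((continuous_apply k).comp continuous_fst).continuousAt
  have hc2 : ContinuousAt (fun p : (Fin e → ℂ) × ℂ => p.2) (α, z₀) :=
    continuous_snd.continuousAt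
  have hconjc : Continuous (starRingEnd ℂ) := Complex.continuous_conj
  have hNc : ContinuousAt N (α, z₀) := by
    apply ContinuousAt.mul
    apply ContinuousAt.mul
    · exact tendsto_finset_prod Finset.univ fun k _ =>
        ((continuousAt_const.sub ((hconjc.continuousAt).comp (hc1 k))).div
          (continuousAt_const.sub (hc1 k)) (hα1 k))
    · exact hc2
    · exact tendsto_finset_prod Finset.univ fun k _ => (hc2.sub (hc1 k))
  have hN0 : N (α, z₀) ≠ 0 := by
    refine mul_ne_zero (mul_ne_zero ?_ hz0) ?_
    · exact Finset.prod_ne_zero_iff.2 fun k _ => div_ne_zero (hconj k) (hα1 k)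
    · exact Finset.prod_ne_zero_iff.2 fun k _ => hnum k
  set c := ‖N (α, z₀)‖ with hcdef
  have hc : 0 < c := norm_pos_iff.mpr hN0
  have habsN : Tendsto (fun p => ‖N p‖) (𝓝 (α, z₀)) (𝓝 c) :=
    (continuous_norm.continuousAt).comp hNc
  have habsD : Tendsto (fun p : (Fin e → ℂ) × ℂ =>
      ‖blaschkeDen Finset.univ p.1 p.2‖) (𝓝 (α, z₀)) (𝓝 0) := by
    have := (continuous_norm.continuousAt).comp
      (contAt_blaschkeDen (α := α) (z₀ := z₀))
    have h2 : Tendsto (fun p : (Fin e → ℂ) × ℂ =>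
        ‖blaschkeDen Finset.univ p.1 p.2‖) (𝓝 (α, z₀))
        (𝓝 (‖blaschkeDen Finset.univ α z₀‖)) := this
    rwa [hDen0, norm_zero] at h2
  apply tendsto_embed_infty
  intro M
  set M' : ℝ := max M 1 with hM'def
  have hM'pos : (0:ℝ) < M' := lt_of_lt_of_le one_pos (le_max_right M 1)
  set δ : ℝ := c / (2 * M') with hδdef
  have hδ : 0 < δ := by positivity
  have hM'δ : M' * δ = c / 2 := by rw [hδdef]; field_simp
  have hev1 : ∀ᶠ p : (Fin e → ℂ) × ℂ in 𝓝 (α, z₀), c / 2 < ‖N p‖ :=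
    habsN.eventually (eventually_gt_nhds (by linarith))
  have hev2 : ∀ᶠ p : (Fin e → ℂ) × ℂ in 𝓝 (α, z₀),
      ‖blaschkeDen Finset.univ p.1 p.2‖ < δ :=
    habsD.eventually (eventually_lt_nhds hδ)
  filter_upwards [hev1, hev2] with p h1 h2
  by_cases hd : blaschkeDen Finset.univ p.1 p.2 = 0
  · refine Or.inl ?_
    show (if _ then _ else _) = _
    rw [if_pos hd]
  · refine Or.inr ⟨blaschkeFun Finset.univ p.1 p.2, ?_, ?_⟩
    · show (if _ then _ else _) = _
      rw [if_neg hd]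
    · rw [blaschkeFun_eq_div, norm_div]
      have hDpos : 0 < ‖blaschkeDen Finset.univ p.1 p.2‖ :=
        norm_pos_iff.mpr hd
      rw [le_div_iff₀ hDpos]
      have hMM' : M ≤ M' := le_max_left M 1
      have hND : ‖N p‖ = ‖
          ((∏ k : Fin e, (1 - (starRingEnd ℂ) (p.1 k)) / (1 - p.1 k)) * p.2 *
            ∏ k : Fin e, (p.2 - p.1 k))‖ := rfl
      rw [← hND]
      nlinarith [norm_nonneg (blaschkeDen Finset.univ p.1 p.2)]

lemma main_contAt {e : ℕ} {α : Fin e → ℂ} (hle : ∀ k, ‖α k‖ ≤ 1)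
    (h1 : ∀ k, ‖α k‖ = 1 → α k ≠ 1) {w : OnePoint ℂ}
    (hw : ∀ k, ‖α k‖ = 1 → w ≠ OnePoint.some (α k)) :
    ContinuousAt (fun p : (Fin e → ℂ) × OnePoint ℂ =>
      sphereEmbed (blaschkeSphere Finset.univ p.1 p.2)) (α, w) := by
  have hne1 : ∀ k, α k ≠ 1 := fun k hk => h1 k (by rw [hk]; simp) hk
  have hα1 : ∀ k, (1 : ℂ) - α k ≠ 0 := fun k => sub_ne_zero.2 (Ne.symm (hne1 k))
  induction w using OnePoint.rec with
  | infty => exact tendsto_infty_case hle hne1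
  | coe z₀ =>
    have hz : ∀ k, ‖α k‖ = 1 → z₀ ≠ α k :=
      fun k hk h => hw k hk (by rw [h])
    have hmap : 𝓝 ((α, (z₀ : OnePoint ℂ)) : (Fin e → ℂ) × OnePoint ℂ) =
        Filter.map (Prod.map (id : (Fin e → ℂ) → (Fin e → ℂ)) OnePoint.some)
          (𝓝 ((α, z₀) : (Fin e → ℂ) × ℂ)) := by
      have h := Filter.prod_map_map_eq' (id : (Fin e → ℂ) → (Fin e → ℂ))
        (OnePoint.some : ℂ → OnePoint ℂ) (𝓝 α) (𝓝 z₀)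
      rw [Filter.map_id] at h
      rw [nhds_prod_eq, nhds_prod_eq, OnePoint.nhds_coe_eq, h]
    have key : Tendsto (fun q : (Fin e → ℂ) × ℂ =>
        sphereEmbed (blaschkeSphere Finset.univ q.1 (OnePoint.some q.2))) (𝓝 (α, z₀))
        (𝓝 (sphereEmbed (blaschkeSphere Finset.univ α (OnePoint.some z₀)))) := by
      by_cases hd : blaschkeDen Finset.univ α z₀ = 0
      · have hval : blaschkeSphere Finset.univ α (OnePoint.some z₀) = OnePoint.infty := by
          show (if _ then _ else _) = _
          rw [if_pos hd]
        rw [hval]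
        obtain ⟨j, -, hj⟩ := Finset.prod_eq_zero_iff.1 hd
        have hjz : (starRingEnd ℂ) (α j) * z₀ = 1 := by linear_combination -hj
        have habs : ‖α j‖ * ‖z₀‖ = 1 := by
          rw [← Complex.norm_conj (α j), ← norm_mul, hjz, norm_one]
        have hnum : ∀ k, z₀ - α k ≠ 0 := by
          intro k hzk
          have hzα : z₀ = α k := by linear_combination hzk
          have h1z : ‖z₀‖ ≤ 1 := by rw [hzα]; exact hle k
          have hj1 : ‖α j‖ = 1 := by
            nlinarith [hle j, norm_nonneg (α j), norm_nonneg z₀]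
          exact one_sub_conj_mul_ne hj1 (hz j hj1) hj
        have hz0 : z₀ ≠ 0 := by
          intro h; rw [h, norm_zero, mul_zero] at habs; exact zero_ne_one habs
        have hconj : ∀ k, (1 : ℂ) - (starRingEnd ℂ) (α k) ≠ 0 := by
          intro k hc
          have hc1 : (starRingEnd ℂ) (α k) = 1 := by linear_combination -hc
          have hc2 : α k = 1 := by
            have := congrArg (starRingEnd ℂ) hc1
            simpa using this
          exact hne1 k hc2
        exact tendsto_sphere_pole hα1 hconj hnum hz0 hd
      · have hdk : ∀ k, (1 : ℂ) - (starRingEnd ℂ) (α k) * z₀ ≠ 0 :=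
          fun k h => hd (Finset.prod_eq_zero (Finset.mem_univ k) h)
        have hval : blaschkeSphere Finset.univ α (OnePoint.some z₀) =
            OnePoint.some (blaschkeFun Finset.univ α z₀) := by
          show (if _ then _ else _) = _
          rw [if_neg hd]
        rw [hval]
        exact tendsto_sphere_reg hα1 hdk
    unfold ContinuousAt
    rw [hmap, Filter.tendsto_map'_iff]
    exact key

/-- If the free zeros `a n k ∈ 𝔻` of the fixed-point-centered Blaschke
products `B n` converge to `α k ∈ closure 𝔻` and `1 ∉ S := {α k : |α k| = 1}`, then `B n`
converges, uniformly on every compact subset of `ℂ̂ ∖ S`, to the fixed-point-centered Blaschke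
product `B⁰` whose free zeros are the `α k` with `|α k| < 1`. -/
theorem blaschke_degenerate_convergence
    (e : ℕ) (a : ℕ → Fin e → ℂ) (α : Fin e → ℂ)
    (ha : ∀ n k, ‖a n k‖ < 1)
    (hmem : ∀ k, α k ∈ closure (Metric.ball (0 : ℂ) 1))
    (hconv : ∀ k, Tendsto (fun n => a n k) atTop (𝓝 (α k)))
    (h1 : ∀ k, ‖α k‖ = 1 → α k ≠ 1) :
    ∀ K : Set (OnePoint ℂ), IsCompact K →
      (∀ k, ‖α k‖ = 1 → OnePoint.some (α k) ∉ K) →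
      ∀ ε : ℝ, 0 < ε → ∀ᶠ n in atTop, ∀ w ∈ K,
        sphDist (blaschkeSphere Finset.univ (a n) w)
          (blaschkeSphere (Finset.univ.filter fun k => ‖α k‖ < 1) α w) < ε := by
  intro K hK hKav ε hε
  have hle : ∀ k, ‖α k‖ ≤ 1 := by
    intro k
    have h := hmem k
    rw [closure_ball (0 : ℂ) one_ne_zero, Metric.mem_closedBall, Complex.dist_eq,
      sub_zero] at h
    exact h
  have hwav : ∀ w ∈ K, ∀ k, ‖α k‖ = 1 → w ≠ OnePoint.some (α k) := by
    intro w hw k hk heq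
    exact hKav k hk (heq ▸ hw)
  have hconvPi : Tendsto a atTop (𝓝 α) := tendsto_pi_nhds.2 hconv
  have hmain := key_unif (T := (Set.univ : Set ((Fin e → ℂ) × OnePoint ℂ))) hK hconvPi
    (fun n x _ => Set.mem_univ _) (fun w _ => Set.mem_univ _)
    (f := fun p : (Fin e → ℂ) × OnePoint ℂ => sphereEmbed (blaschkeSphere Finset.univ p.1 p.2))
    (fun w hw => (main_contAt hle h1 (hwav w hw)).continuousWithinAt) ε hε
  filter_upwards [hmain] with n hn
  intro w hw
  have hd := hn w hw
  rw [blaschkeSphere_univ_eq hle h1 (hwav w hw)] at hd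
  unfold sphDist
  exact hd
end
end

section
/- Let B be a finite Blaschke product of degree d ≥ 2 with B(0) = 0, i.e. B(z) = λ z ∏_{k=1}^{d−1} (z − a_k)/(1 − conj(a_k) z) with |λ| = 1 and a_1, …, a_{d−1} ∈ 𝔻. If K ⊆ ∂𝔻 is a closed set with B(K) ⊆ K and K ≠ ∂𝔻, then K is totally disconnected. -/
open Filter Metric Set Topology

noncomputable section

open Complex in
lemma aux_ne {a z : ℂ} (ha : ‖a‖ < 1) (hz : ‖z‖ = 1) :
    1 - (starRingEnd ℂ) a * z ≠ 0 := by
  intro h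
  have h1 : (starRingEnd ℂ) a * z = 1 := by linear_combination -h
  have := congrArg (‖·‖) h1
  simp [norm_mul, hz, Complex.norm_conj] at this
  exact absurd this (by linarith)

open Complex in
lemma aux_sub_ne {a z : ℂ} (ha : ‖a‖ < 1) (hz : ‖z‖ = 1) :
    z - a ≠ 0 := by
  intro h
  have : z = a := by linear_combination h
  rw [this] at hz; linarith [hz ▸ ha]

open Complex in
lemma factor_hasDerivAt {a z : ℂ} (h : 1 - (starRingEnd ℂ) a * z ≠ 0) :
    HasDerivAt (fun w => (w - a) / (1 - (starRingEnd ℂ) a * w))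
      ((1 - (starRingEnd ℂ) a * a) / (1 - (starRingEnd ℂ) a * z) ^ 2) z := by
  have hu : HasDerivAt (fun w : ℂ => w - a) 1 z := (hasDerivAt_id z).sub_const a
  have hv : HasDerivAt (fun w : ℂ => 1 - (starRingEnd ℂ) a * w) (-((starRingEnd ℂ) a)) z := by
    simpa using (((hasDerivAt_id z).const_mul ((starRingEnd ℂ) a)).const_sub 1)
  have := hu.fun_div hv h
  refine this.congr_deriv ?_
  ring

open Complex in
lemma conj_mul_self' (a : ℂ) : (starRingEnd ℂ) a * a = ((‖a‖ ^ 2 : ℝ) : ℂ) := by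
  rw [mul_comm, Complex.mul_conj]; norm_cast; rw [Complex.normSq_eq_norm_sq]

open Complex in
lemma term_eq {a z : ℂ} (ha : ‖a‖ < 1) (hz : ‖z‖ = 1) :
    z * ((1 - (starRingEnd ℂ) a * a) / (1 - (starRingEnd ℂ) a * z) ^ 2)
      = ((z - a) / (1 - (starRingEnd ℂ) a * z)) *
        (((1 - ‖a‖ ^ 2) / ‖z - a‖ ^ 2 : ℝ) : ℂ) := by
  have hz0 : z ≠ 0 := by intro h; rw [h] at hz; simp at hz
  have hza : z - a ≠ 0 := aux_sub_ne ha hz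
  have hzc : z * (starRingEnd ℂ) z = 1 := by
    rw [Complex.mul_conj]
    norm_cast
    rw [Complex.normSq_eq_norm_sq, hz]; norm_num
  have h1 : 1 - (starRingEnd ℂ) a * z = z * (starRingEnd ℂ) (z - a) := by
    rw [map_sub, mul_sub, hzc]; ring
  have h2 : ((‖z - a‖ ^ 2 : ℝ) : ℂ) = (z - a) * (starRingEnd ℂ) (z - a) := by
    rw [Complex.mul_conj]; norm_cast; rw [Complex.normSq_eq_norm_sq]
  have h3 : ((1 - ‖a‖ ^ 2 : ℝ) : ℂ) = 1 - (starRingEnd ℂ) a * a := by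
    rw [Complex.ofReal_sub, Complex.ofReal_one, conj_mul_self']
  have hC : (starRingEnd ℂ) (z - a) ≠ 0 := by
    simpa using (map_ne_zero (starRingEnd ℂ)).mpr hza
  rw [Complex.ofReal_div, h2, h3, h1, mul_div_assoc', div_mul_div_comm, div_eq_div_iff]
  · ring
  · exact pow_ne_zero 2 (mul_ne_zero hz0 hC)
  · exact mul_ne_zero (mul_ne_zero hz0 hC) (mul_ne_zero hza hC)

/-- Let `B` be a finite Blaschke product of degree `d ≥ 2` fixing `0`,
i.e. `B(z) = λ z ∏_{k=1}^{d-1} (z - a k)/(1 - conj (a k) z)` with `|λ| = 1` and `a k ∈ 𝔻`.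
Every closed forward-invariant proper subset `K` of the unit circle is totally
disconnected. -/
theorem closed_invariant_proper_subset_of_circle_totallyDisconnected
    (d : ℕ) (hd : 2 ≤ d) (lam : ℂ) (hlam : ‖lam‖ = 1)
    (a : Fin (d - 1) → ℂ) (ha : ∀ k, ‖a k‖ < 1)
    (B : ℂ → ℂ)
    (hB : ∀ z, B z = lam * z * ∏ k, (z - a k) / (1 - (starRingEnd ℂ) (a k) * z))
    (K : Set ℂ) (hKclosed : IsClosed K) (hKsub : K ⊆ Metric.sphere (0 : ℂ) 1)
    (hKinv : Set.MapsTo B K K) (hKne : K ≠ Metric.sphere (0 : ℂ) 1) :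
    IsTotallyDisconnected K := by
  classical
  obtain rfl : B = fun z => lam * z * ∏ k, (z - a k) / (1 - (starRingEnd ℂ) (a k) * z) :=
    funext hB
  clear hB
  set B : ℂ → ℂ := fun z => lam * z * ∏ k, (z - a k) / (1 - (starRingEnd ℂ) (a k) * z) with hBdef
  -- index nonempty
  have hd1 : 0 < d - 1 := by omega
  set k0 : Fin (d - 1) := ⟨0, hd1⟩ with hk0
  -- the expansion constant
  set m : ℝ := (1 - ‖a k0‖ ^ 2) / (1 + ‖a k0‖) ^ 2 with hmdef
  have hm : 0 < m := by
    apply div_pos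
    · have := ha k0
      have h0 := norm_nonneg (a k0)
      nlinarith
    · have h0 := norm_nonneg (a k0)
      positivity
  -- the Poisson-type density
  set P : ℝ → ℝ := fun θ => 1 + ∑ k, (1 - ‖a k‖ ^ 2) /
      ‖Complex.exp (θ * Complex.I) - a k‖ ^ 2 with hPdef
  have hexpabs : ∀ θ : ℝ, ‖Complex.exp (θ * Complex.I)‖ = 1 := fun θ =>
    Complex.norm_exp_ofReal_mul_I θ
  have hne0 : ∀ (k : Fin (d - 1)) (θ : ℝ), Complex.exp (θ * Complex.I) - a k ≠ 0 := by
    intro k θ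
    exact aux_sub_ne (ha k) (hexpabs θ)
  -- continuity of P
  have hcexp : Continuous fun θ : ℝ => Complex.exp (θ * Complex.I) := by
    exact Complex.continuous_exp.comp (Complex.continuous_ofReal.mul continuous_const)
  have hPcont : Continuous P := by
    apply continuous_const.add
    apply continuous_finset_sum
    intro k _
    apply continuous_const.div
    · exact (continuous_norm.comp (hcexp.sub continuous_const)).pow 2
    · intro θ
      exact pow_ne_zero 2 (norm_ne_zero_iff.mpr (hne0 k θ))
  -- lower bound for P
  have hPm : ∀ θ, 1 + m ≤ P θ := by
    intro θ
    have hterm : m ≤ (1 - ‖a k0‖ ^ 2) /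
        ‖Complex.exp (θ * Complex.I) - a k0‖ ^ 2 := by
      apply div_le_div_of_nonneg_left
      · have := ha k0; have h0 := norm_nonneg (a k0); nlinarith
      · exact pow_pos (norm_pos_iff.mpr (hne0 k0 θ)) 2
      · have h1 : ‖Complex.exp (θ * Complex.I) - a k0‖ ≤
            1 + ‖a k0‖ := by
          calc ‖Complex.exp (θ * Complex.I) - a k0‖
              ≤ ‖Complex.exp (θ * Complex.I)‖ + ‖a k0‖ :=
                norm_sub_le _ _
            _ = 1 + ‖a k0‖ := by rw [hexpabs]
        have h2 : 0 ≤ ‖Complex.exp (θ * Complex.I) - a k0‖ :=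
          norm_nonneg _
        nlinarith
    have hsum : (1 - ‖a k0‖ ^ 2) /
        ‖Complex.exp (θ * Complex.I) - a k0‖ ^ 2 ≤
        ∑ k, (1 - ‖a k‖ ^ 2) /
          ‖Complex.exp (θ * Complex.I) - a k‖ ^ 2 := by
      apply Finset.single_le_sum (f := fun k => (1 - ‖a k‖ ^ 2) /
        ‖Complex.exp (θ * Complex.I) - a k‖ ^ 2) _ (Finset.mem_univ k0)
      intro k _
      apply div_nonneg
      · have := ha k; have h0 := norm_nonneg (a k); nlinarith
      · positivity
    simp only [hPdef]
    linarith
  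
  -- the derivative of B
  set D : ℂ → ℂ := fun z => lam * (∏ k, (z - a k) / (1 - (starRingEnd ℂ) (a k) * z)) +
      lam * z * ∑ k, (∏ j ∈ Finset.univ.erase k, (z - a j) / (1 - (starRingEnd ℂ) (a j) * z)) *
        ((1 - (starRingEnd ℂ) (a k) * a k) / (1 - (starRingEnd ℂ) (a k) * z) ^ 2) with hDdef
  have hD : ∀ z : ℂ, ‖z‖ = 1 → HasDerivAt B (D z) z := by
    intro z hz
    have h1 : HasDerivAt (fun w : ℂ => lam * w) lam z := by
      simpa using (hasDerivAt_id z).const_mul lam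
    have hprod : HasDerivAt (fun w : ℂ => ∏ k, (w - a k) / (1 - (starRingEnd ℂ) (a k) * w))
        (∑ k, (∏ j ∈ Finset.univ.erase k, (z - a j) / (1 - (starRingEnd ℂ) (a j) * z)) •
          ((1 - (starRingEnd ℂ) (a k) * a k) / (1 - (starRingEnd ℂ) (a k) * z) ^ 2)) z := by
      exact HasDerivAt.fun_finsetProd (fun k _ => factor_hasDerivAt (aux_ne (ha k) hz))
    have h2 := h1.mul hprod
    simp only [smul_eq_mul] at h2
    exact h2
  -- the key identity : z * B'(z) = B(z) * (1 + sum of Poisson terms)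
  have hDkey : ∀ z : ℂ, ‖z‖ = 1 → z * D z = B z *
      (1 + ∑ k, (((1 - ‖a k‖ ^ 2) / ‖z - a k‖ ^ 2 : ℝ) : ℂ)) := by
    intro z hz
    have hsum : z * (∑ k, (∏ j ∈ Finset.univ.erase k, (z - a j) / (1 - (starRingEnd ℂ) (a j) * z)) *
        ((1 - (starRingEnd ℂ) (a k) * a k) / (1 - (starRingEnd ℂ) (a k) * z) ^ 2)) =
        (∏ k, (z - a k) / (1 - (starRingEnd ℂ) (a k) * z)) *
          ∑ k, (((1 - ‖a k‖ ^ 2) / ‖z - a k‖ ^ 2 : ℝ) : ℂ) := by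
      rw [Finset.mul_sum, Finset.mul_sum]
      apply Finset.sum_congr rfl
      intro k _
      calc z * ((∏ j ∈ Finset.univ.erase k, (z - a j) / (1 - (starRingEnd ℂ) (a j) * z)) *
            ((1 - (starRingEnd ℂ) (a k) * a k) / (1 - (starRingEnd ℂ) (a k) * z) ^ 2))
          = (∏ j ∈ Finset.univ.erase k, (z - a j) / (1 - (starRingEnd ℂ) (a j) * z)) *
            (z * ((1 - (starRingEnd ℂ) (a k) * a k) / (1 - (starRingEnd ℂ) (a k) * z) ^ 2)) := by
            ring
        _ = (∏ j ∈ Finset.univ.erase k, (z - a j) / (1 - (starRingEnd ℂ) (a j) * z)) *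
            (((z - a k) / (1 - (starRingEnd ℂ) (a k) * z)) *
              (((1 - ‖a k‖ ^ 2) / ‖z - a k‖ ^ 2 : ℝ) : ℂ)) := by
            rw [term_eq (ha k) hz]
        _ = ((∏ j ∈ Finset.univ.erase k, (z - a j) / (1 - (starRingEnd ℂ) (a j) * z)) *
              ((z - a k) / (1 - (starRingEnd ℂ) (a k) * z))) *
            (((1 - ‖a k‖ ^ 2) / ‖z - a k‖ ^ 2 : ℝ) : ℂ) := by
            ring
        _ = (∏ j, (z - a j) / (1 - (starRingEnd ℂ) (a j) * z)) *
            (((1 - ‖a k‖ ^ 2) / ‖z - a k‖ ^ 2 : ℝ) : ℂ) := by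
            rw [Finset.prod_erase_mul _ _ (Finset.mem_univ k)]
    have expand : z * D z = lam * z * (∏ k, (z - a k) / (1 - (starRingEnd ℂ) (a k) * z)) +
        lam * z * (z * ∑ k, (∏ j ∈ Finset.univ.erase k, (z - a j) / (1 - (starRingEnd ℂ) (a j) * z)) *
          ((1 - (starRingEnd ℂ) (a k) * a k) / (1 - (starRingEnd ℂ) (a k) * z) ^ 2)) := by
      simp only [hDdef]; ring
    rw [expand, hsum, hBdef]
    ring
  -- relation between P and the complex sum
  have hcast : ∀ θ : ℝ, ((P θ : ℝ) : ℂ) = 1 + ∑ k,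
      (((1 - ‖a k‖ ^ 2) / ‖Complex.exp (θ * Complex.I) - a k‖ ^ 2 : ℝ) : ℂ) := by
    intro θ
    simp only [hPdef]
    push_cast
    ring
  have hkey : ∀ θ : ℝ, Complex.exp (θ * Complex.I) * D (Complex.exp (θ * Complex.I)) =
      B (Complex.exp (θ * Complex.I)) * ((P θ : ℝ) : ℂ) := by
    intro θ
    rw [hcast θ]
    exact hDkey _ (hexpabs θ)
  -- |B 1| = 1
  have hB1abs : ‖B 1‖ = 1 := by
    have hfac : ∀ k : Fin (d - 1),
        ‖(1 - a k) / (1 - (starRingEnd ℂ) (a k) * 1)‖ = 1 := by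
      intro k
      have h1 : (1 : ℂ) - a k ≠ 0 := aux_sub_ne (ha k) (by simp)
      have h2 : (1 : ℂ) - (starRingEnd ℂ) (a k) * 1 = (starRingEnd ℂ) (1 - a k) := by
        rw [map_sub, map_one]; ring
      rw [norm_div, h2, Complex.norm_conj, div_self (norm_ne_zero_iff.mpr h1)]
    simp only [hBdef]
    rw [norm_mul, norm_mul, hlam, norm_one, norm_prod]
    simp only [hfac]
    simp
  have hB1ne : B 1 ≠ 0 := by
    intro h; rw [h] at hB1abs; simp at hB1abs
  have hexparg : Complex.exp ((Complex.arg (B 1) : ℝ) * Complex.I) = B 1 := by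
    have := Complex.norm_mul_exp_arg_mul_I (B 1)
    rw [hB1abs] at this
    simpa using this
  -- the lift h of B along the circle
  set h : ℝ → ℝ := fun u => Complex.arg (B 1) + ∫ t in (0:ℝ)..u, P t with hhdef
  have hPint : ∀ s t : ℝ, IntervalIntegrable P MeasureTheory.volume s t := fun s t =>
    hPcont.intervalIntegrable s t
  have hdh : ∀ θ : ℝ, HasDerivAt h (P θ) θ := by
    intro θ
    apply HasDerivAt.const_add
    exact intervalIntegral.integral_hasDerivAt_right (hPint 0 θ)
      (hPcont.stronglyMeasurable.stronglyMeasurableAtFilter) hPcont.continuousAt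
  have hhcont : Continuous h := by
    have : Differentiable ℝ h := fun θ => (hdh θ).differentiableAt
    exact this.continuous
  -- the fundamental lift identity
  have hlift : ∀ θ : ℝ, B (Complex.exp (θ * Complex.I)) = Complex.exp ((h θ : ℝ) * Complex.I) := by
    set F : ℝ → ℂ := fun u => B (Complex.exp (u * Complex.I)) *
      Complex.exp (-((h u : ℝ) * Complex.I)) with hFdef
    have hG : ∀ θ : ℝ, HasDerivAt (fun u : ℝ => B (Complex.exp (u * Complex.I)))
        (D (Complex.exp (θ * Complex.I)) * (Complex.exp (θ * Complex.I) * Complex.I)) θ := by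
      intro θ
      have hin : HasDerivAt (fun w : ℂ => Complex.exp (w * Complex.I))
          (Complex.exp ((θ : ℂ) * Complex.I) * Complex.I) (θ : ℂ) := by
        simpa using ((hasDerivAt_id ((θ : ℂ))).mul_const Complex.I).cexp
      have hout := (hD _ (hexpabs θ)).comp (θ : ℂ) hin
      exact hout.comp_ofReal
    have hE : ∀ θ : ℝ, HasDerivAt (fun u : ℝ => Complex.exp (-((h u : ℝ) * Complex.I)))
        (Complex.exp (-((h θ : ℝ) * Complex.I)) * -((P θ : ℝ) * Complex.I)) θ := by
      intro θ
      exact (((hdh θ).ofReal_comp.mul_const Complex.I).neg).cexp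
    have hF0 : ∀ θ : ℝ, HasDerivAt F 0 θ := by
      intro θ
      have hval := (hG θ).mul (hE θ)
      have hzero : D (Complex.exp (θ * Complex.I)) * (Complex.exp (θ * Complex.I) * Complex.I) *
          Complex.exp (-((h θ : ℝ) * Complex.I)) + B (Complex.exp (θ * Complex.I)) *
          (Complex.exp (-((h θ : ℝ) * Complex.I)) * -((P θ : ℝ) * Complex.I)) = 0 := by
        linear_combination (Complex.exp (-((h θ : ℝ) * Complex.I)) * Complex.I) * hkey θ
      rw [hzero] at hval
      exact hval
    have hconst : ∀ θ : ℝ, F θ = F 0 :=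
      fun θ => is_const_of_deriv_eq_zero (fun u => (hF0 u).differentiableAt)
        (fun u => (hF0 u).deriv) θ 0
    have hFval : F 0 = 1 := by
      simp only [hFdef]
      have h0 : h 0 = Complex.arg (B 1) := by
        simp [hhdef, intervalIntegral.integral_same]
      rw [h0]
      have : ((0 : ℝ) : ℂ) * Complex.I = 0 := by simp
      rw [this, Complex.exp_zero, Complex.exp_neg, hexparg]
      exact mul_inv_cancel₀ hB1ne
    intro θ
    have hFθ : F θ = 1 := (hconst θ).trans hFval
    have hne : Complex.exp (-((h θ : ℝ) * Complex.I)) ≠ 0 := Complex.exp_ne_zero _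
    calc B (Complex.exp (θ * Complex.I))
        = B (Complex.exp (θ * Complex.I)) *
          (Complex.exp (-((h θ : ℝ) * Complex.I)) * Complex.exp ((h θ : ℝ) * Complex.I)) := by
          rw [← Complex.exp_add]; simp
      _ = F θ * Complex.exp ((h θ : ℝ) * Complex.I) := by rw [hFdef]; ring
      _ = Complex.exp ((h θ : ℝ) * Complex.I) := by rw [hFθ, one_mul]
  -- growth of h
  have hgrow : ∀ s t : ℝ, s ≤ t → (1 + m) * (t - s) ≤ h t - h s := by
    intro s t hst
    have hdiff : h t - h s = ∫ u in s..t, P u := by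
      simp only [hhdef]
      rw [add_sub_add_left_eq_sub]
      rw [← intervalIntegral.integral_interval_sub_left (hPint 0 t) (hPint 0 s)]
    have hconst : ∫ u in s..t, (1 + m) = (t - s) * (1 + m) := by
      rw [intervalIntegral.integral_const]; simp [smul_eq_mul]
    have hmono := intervalIntegral.integral_mono_on hst
      (intervalIntegrable_const) (hPint s t) (fun x _ => hPm x)
    rw [hdiff]
    rw [hconst] at hmono
    linarith
  have hmono : Monotone h := by
    intro s t hst
    have := hgrow s t hst
    nlinarith
  -- iterated growth
  have hiter : ∀ (n : ℕ) (s t : ℝ), s ≤ t → (1 + m) ^ n * (t - s) ≤ h^[n] t - h^[n] s := by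
    intro n
    induction n with
    | zero => intro s t hst; simp
    | succ n ih =>
      intro s t hst
      have h1 := ih s t hst
      have h2 : h^[n] s ≤ h^[n] t := (hmono.iterate n) hst
      have h3 := hgrow _ _ h2
      rw [Function.iterate_succ_apply', Function.iterate_succ_apply']
      have h4 : (1 + m) * ((1 + m) ^ n * (t - s)) ≤ (1 + m) * (h^[n] t - h^[n] s) := by
        apply mul_le_mul_of_nonneg_left h1 (by linarith)
      calc (1 + m) ^ (n + 1) * (t - s) = (1 + m) * ((1 + m) ^ n * (t - s)) := by ring
        _ ≤ (1 + m) * (h^[n] t - h^[n] s) := h4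
        _ ≤ h (h^[n] t) - h (h^[n] s) := h3
  -- iterated lift
  have hliftn : ∀ (n : ℕ) (θ : ℝ), B^[n] (Complex.exp (θ * Complex.I)) =
      Complex.exp ((h^[n] θ : ℝ) * Complex.I) := by
    intro n
    induction n with
    | zero => intro θ; simp
    | succ n ih =>
      intro θ
      rw [Function.iterate_succ_apply, Function.iterate_succ_apply, hlift θ, ih (h θ)]
  
  -- ENDGAME
  intro C hCK hCpre
  by_contra hns
  rw [Set.not_subsingleton_iff] at hns
  obtain ⟨x, hx, y, hy, hxy⟩ := hns
  obtain ⟨p, hpsph, hpK⟩ := Set.exists_of_ssubset (hKsub.ssubset_of_ne hKne)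
  have habs1 : ∀ z ∈ K, ‖z‖ = 1 := by
    intro z hz
    have := mem_sphere_zero_iff_norm.mp (hKsub hz)
    exact this
  have hp1 : ‖p‖ = 1 := by
    have := mem_sphere_zero_iff_norm.mp hpsph
    exact this
  have hp0 : p ≠ 0 := by intro h0; rw [h0] at hp1; simp at hp1
  set g : ℂ → ℝ := fun z => Complex.arg (-(z / p)) with hgdef
  have heg : ∀ z : ℂ, ‖z‖ = 1 → -p * Complex.exp ((g z : ℝ) * Complex.I) = z := by
    intro z hz
    have habsw : ‖-(z / p)‖ = 1 := by
      rw [norm_neg, norm_div, hz, hp1]; norm_num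
    have hw := Complex.norm_mul_exp_arg_mul_I (-(z / p))
    rw [habsw] at hw
    simp only [Complex.ofReal_one, one_mul] at hw
    simp only [hgdef]
    rw [hw]
    field_simp
  have hgcont : ∀ z ∈ C, ContinuousAt g z := by
    intro z hz
    have hzK := hCK hz
    have hz1 := habs1 z hzK
    have hzp : z ≠ p := fun h0 => hpK (h0 ▸ hzK)
    have habsw : ‖-(z / p)‖ = 1 := by
      rw [norm_neg, norm_div, hz1, hp1]; norm_num
    have hwslit : -(z / p) ∈ Complex.slitPlane := by
      rw [Complex.mem_slitPlane_iff]
      by_contra hcon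
      push_neg at hcon
      obtain ⟨hre, him⟩ := hcon
      have hwre : -(z / p) = (((-(z / p)).re : ℝ) : ℂ) := by
        apply Complex.ext
        · simp
        · simpa using him
      have habsre : |(-(z / p)).re| = 1 := by
        rw [hwre] at habsw; simpa using habsw
      have hwre1 : (-(z / p)).re = -1 := by
        rcases abs_cases (-(z / p)).re with ⟨h1, _⟩ | ⟨h1, _⟩ <;> linarith
      have hweq : z / p = 1 := by
        have : -(z / p) = -1 := by rw [hwre, hwre1]; norm_num
        linear_combination -this
      apply hzp
      field_simp at hweq
      exact hweq
    have hinner : ContinuousAt (fun w : ℂ => -(w / p)) z :=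
      (((continuous_id.div_const p).neg).continuousAt)
    exact ContinuousAt.comp (g := Complex.arg) (f := fun w : ℂ => -(w / p))
      (Complex.continuousAt_arg hwslit) hinner
  have hgC : IsPreconnected (g '' C) :=
    hCpre.image g (fun z hz => (hgcont z hz).continuousWithinAt)
  have hgxy : g x ≠ g y := by
    intro hgeq
    apply hxy
    rw [← heg x (habs1 x (hCK hx)), ← heg y (habs1 y (hCK hy)), hgeq]
  obtain ⟨s, t, hst, hsC, htC⟩ : ∃ s t : ℝ, s < t ∧ s ∈ g '' C ∧ t ∈ g '' C := by
    rcases hgxy.lt_or_gt with hc | hc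
    · exact ⟨g x, g y, hc, ⟨x, hx, rfl⟩, ⟨y, hy, rfl⟩⟩
    · exact ⟨g y, g x, hc, ⟨y, hy, rfl⟩, ⟨x, hx, rfl⟩⟩
  have hIcc : Set.Icc s t ⊆ g '' C := hgC.Icc_subset hsC htC
  have hArc : ∀ θ ∈ Set.Icc s t, -p * Complex.exp ((θ : ℝ) * Complex.I) ∈ K := by
    intro θ hθ
    obtain ⟨w, hwC, hweq⟩ := hIcc hθ
    rw [← hweq, heg w (habs1 w (hCK hwC))]
    exact hCK hwC
  set β : ℝ := Complex.arg (-p) with hβdef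
  have hβ : Complex.exp ((β : ℝ) * Complex.I) = -p := by
    have habs : ‖-p‖ = 1 := by rw [norm_neg, hp1]
    have h2 := Complex.norm_mul_exp_arg_mul_I (-p)
    rw [habs] at h2; simpa using h2
  have hArc2 : ∀ θ ∈ Set.Icc s t, Complex.exp (((β + θ : ℝ) : ℂ) * Complex.I) ∈ K := by
    intro θ hθ
    have heq2 : Complex.exp (((β + θ : ℝ) : ℂ) * Complex.I) =
        -p * Complex.exp ((θ : ℝ) * Complex.I) := by
      rw [show (((β + θ : ℝ)) : ℂ) * Complex.I =
          ((β : ℝ) : ℂ) * Complex.I + ((θ : ℝ) : ℂ) * Complex.I by push_cast; ring]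
      rw [Complex.exp_add, hβ]
    rw [heq2]; exact hArc θ hθ
  have hts : 0 < t - s := by linarith
  have hpi := Real.pi_pos
  obtain ⟨n, hn⟩ := pow_unbounded_of_one_lt (2 * Real.pi / (t - s))
    (show (1 : ℝ) < 1 + m by linarith)
  have h2pi : 2 * Real.pi < (1 + m) ^ n * (t - s) := by
    rw [div_lt_iff₀ hts] at hn
    linarith
  set L1 : ℝ := h^[n] (β + s) with hL1
  set L2 : ℝ := h^[n] (β + t) with hL2
  have hL : L1 + 2 * Real.pi < L2 := by
    have h3 := hiter n (β + s) (β + t) (by linarith)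
    have heq3 : (β + t) - (β + s) = t - s := by ring
    rw [heq3] at h3
    linarith
  set q : ℤ := ⌈(L1 - Complex.arg p) / (2 * Real.pi)⌉ with hqdef
  set ξ : ℝ := Complex.arg p + 2 * Real.pi * q with hξdef
  have hξ1 : L1 ≤ ξ := by
    have h1 := Int.le_ceil ((L1 - Complex.arg p) / (2 * Real.pi))
    rw [div_le_iff₀ (by linarith)] at h1
    have : (q : ℝ) * (2 * Real.pi) = 2 * Real.pi * q := by ring
    simp only [hξdef]
    linarith
  have hξ2 : ξ ≤ L2 := by
    have h1 := Int.ceil_lt_add_one ((L1 - Complex.arg p) / (2 * Real.pi))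
    have h2 : ((L1 - Complex.arg p) / (2 * Real.pi)) * (2 * Real.pi) = L1 - Complex.arg p :=
      div_mul_cancel₀ _ (by linarith)
    have h3 : (q : ℝ) * (2 * Real.pi) < L1 - Complex.arg p + 2 * Real.pi := by
      calc (q : ℝ) * (2 * Real.pi)
          < ((L1 - Complex.arg p) / (2 * Real.pi) + 1) * (2 * Real.pi) := by
            apply mul_lt_mul_of_pos_right h1 (by linarith)
        _ = L1 - Complex.arg p + 2 * Real.pi := by rw [add_mul, h2]; ring
    have h4 : 2 * Real.pi * (q : ℝ) = (q : ℝ) * (2 * Real.pi) := by ring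
    simp only [hξdef]
    linarith
  have hexpξ : Complex.exp ((ξ : ℝ) * Complex.I) = p := by
    have hcast2 : ((ξ : ℝ) : ℂ) * Complex.I =
        ((Complex.arg p : ℝ) : ℂ) * Complex.I + (q : ℂ) * (2 * (Real.pi : ℂ) * Complex.I) := by
      simp only [hξdef]; push_cast; ring
    rw [hcast2, Complex.exp_add, Complex.exp_int_mul_two_pi_mul_I]
    have habs := Complex.norm_mul_exp_arg_mul_I p
    rw [hp1] at habs
    simpa using habs
  have hφc : ContinuousOn (fun θ : ℝ => h^[n] (β + θ)) (Set.Icc s t) :=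
    ((hhcont.iterate n).comp (continuous_const.add continuous_id)).continuousOn
  have hIVT := intermediate_value_Icc (le_of_lt hst) hφc
  have hξmem : ξ ∈ Set.Icc ((fun θ : ℝ => h^[n] (β + θ)) s) ((fun θ : ℝ => h^[n] (β + θ)) t) :=
    ⟨hξ1, hξ2⟩
  obtain ⟨θ, hθmem, hθeq⟩ := hIVT hξmem
  apply hpK
  have hmem := hArc2 θ hθmem
  have hfin := Set.MapsTo.iterate hKinv n hmem
  rw [hliftn n (β + θ)] at hfin
  have hθeq' : h^[n] (β + θ) = ξ := hθeq
  rw [hθeq', hexpξ] at hfin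
  exact hfin
end
end
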